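/- arXiv:2010.12372 — 8 statements merged into one kernel-verified Lean document; each statement's English description precedes it below -/
import Mathlib

section
/- Let M₁, ..., M_k be symmetric positive semidefinite d×d real matrices with d ≥ k, and let M = M₁ + ... + M_k. Then the sum of the largest eigenvalues of the individual matrices is bounded by the sum of the k largest eigenvalues of M: ∑_{i=1}^k λ₁(M_i) ≤ ∑_{i=1}^k λ_i(M). -/
/-- The `j`-th largest eigenvalue (counted with multiplicity, `j = 0` being the largest)
of a Hermitian real matrix. -/
noncomputable def kthEig {d : ℕ} (A : Matrix (Fin d) (Fin d) ℝ) (hA : A.IsHermitian)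
    (j : ℕ) : ℝ :=
  ((List.ofFn hA.eigenvalues).mergeSort (fun a b => decide (b ≤ a))).getD j 0

open Matrix Submodule Set

section helpers

lemma dot_sum_right {m n : ℕ} (v : Fin n → ℝ) (f : Fin m → Fin n → ℝ) :
    v ⬝ᵥ (∑ j, f j) = ∑ j, v ⬝ᵥ f j := by
  simp only [dotProduct, Finset.sum_apply, Finset.mul_sum]
  exact Finset.sum_comm

lemma dot_sum_left {m n : ℕ} (v : Fin n → ℝ) (f : Fin m → Fin n → ℝ) :
    (∑ j, f j) ⬝ᵥ v = ∑ j, f j ⬝ᵥ v := by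
  simp only [dotProduct, Finset.sum_apply, Finset.sum_mul]
  exact Finset.sum_comm

lemma mulVec_sum' {m n : ℕ} (A : Matrix (Fin n) (Fin n) ℝ) (f : Fin m → Fin n → ℝ) :
    A *ᵥ (∑ j, f j) = ∑ j, A *ᵥ f j := by
  rw [← Matrix.mulVecLin_apply, map_sum]; simp [Matrix.mulVecLin_apply]

lemma sum_mulVec' {m n : ℕ} (A : Fin m → Matrix (Fin n) (Fin n) ℝ) (v : Fin n → ℝ) :
    (∑ i, A i) *ᵥ v = ∑ i, A i *ᵥ v := by
  funext r
  simp only [Matrix.mulVec, dotProduct, Finset.sum_apply, Matrix.sum_apply, Finset.sum_mul]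
  exact Finset.sum_comm

lemma sorted_spec {n : ℕ} {A : Matrix (Fin n) (Fin n) ℝ} (hA : A.IsHermitian) :
    ∃ σ : Equiv.Perm (Fin n), (∀ j : Fin n, kthEig A hA j = hA.eigenvalues (σ j)) ∧
      ∀ j₁ j₂ : Fin n, j₁ ≤ j₂ → kthEig A hA j₂ ≤ kthEig A hA j₁ := by
  set f := hA.eigenvalues with hf
  set σ : Equiv.Perm (Fin n) := (Fin.revPerm).trans (Tuple.sort f) with hσ
  have hanti : ∀ j₁ j₂ : Fin n, j₁ ≤ j₂ → f (σ j₂) ≤ f (σ j₁) := by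
    intro j₁ j₂ h
    exact Tuple.monotone_sort f (by simpa using Fin.rev_le_rev.mpr h)
  have hlist : (List.ofFn f).mergeSort (fun a b => decide (b ≤ a)) = List.ofFn (f ∘ σ) := by
    refine List.Perm.eq_of_pairwise (le := fun a b : ℝ => b ≤ a)
      (fun a b _ _ h1 h2 => le_antisymm h2 h1) ?_ ?_
      ((List.mergeSort_perm _ _).trans (Equiv.Perm.ofFn_comp_perm σ f).symm)
    · have := List.pairwise_mergeSort (le := fun a b : ℝ => decide (b ≤ a))
        (fun a b c h1 h2 => by
          simp only [decide_eq_true_eq] at *; exact le_trans h2 h1)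
        (fun a b => by simpa using le_total b a) (List.ofFn f)
      exact this.imp (by simp)
    · show (List.ofFn (f ∘ σ)).Pairwise _
      rw [List.pairwise_ofFn]
      intro i j hij
      exact hanti i j hij.le
  have hk : ∀ j : Fin n, kthEig A hA j = f (σ j) := by
    intro j
    rw [kthEig, hlist, List.getD_eq_getElem?_getD]
    rw [List.getElem?_eq_getElem (by simpa using j.2)]
    simp [List.getElem_ofFn]
  exact ⟨σ, hk, fun j₁ j₂ h => by rw [hk, hk]; exact hanti j₁ j₂ h⟩

lemma expand_eigen {n : ℕ} {A : Matrix (Fin n) (Fin n) ℝ} (hA : A.IsHermitian) (x : Fin n → ℝ) :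
    x = ∑ j, (⇑(hA.eigenvectorBasis j) ⬝ᵥ x) • ⇑(hA.eigenvectorBasis j) := by
  have h := hA.eigenvectorBasis.sum_repr' ((WithLp.equiv 2 (Fin n → ℝ)).symm x)
  have h2 := congrArg WithLp.ofLp h.symm
  simpa [EuclideanSpace.inner_eq_star_dotProduct, dotProduct_comm] using h2

lemma dot_mulVec_expand {n : ℕ} {A : Matrix (Fin n) (Fin n) ℝ} (hA : A.IsHermitian)
    (x : Fin n → ℝ) :
    x ⬝ᵥ A *ᵥ x = ∑ j, hA.eigenvalues j * (⇑(hA.eigenvectorBasis j) ⬝ᵥ x) ^ 2 := by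
  set w : Fin n → Fin n → ℝ := fun j => ⇑(hA.eigenvectorBasis j) with hw
  set c : Fin n → ℝ := fun j => w j ⬝ᵥ x with hc
  have h1 : A *ᵥ x = ∑ j, (hA.eigenvalues j * c j) • w j := by
    conv_lhs => rw [expand_eigen hA x]
    rw [mulVec_sum']
    refine Finset.sum_congr rfl fun j _ => ?_
    rw [Matrix.mulVec_smul, hA.mulVec_eigenvectorBasis j]
    rw [smul_smul, mul_comm]
  rw [h1, dot_sum_right]
  refine Finset.sum_congr rfl fun j _ => ?_
  rw [dotProduct_smul, smul_eq_mul, dotProduct_comm, sq]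
  ring

lemma dot_right_expand {n : ℕ} {A : Matrix (Fin n) (Fin n) ℝ} (hA : A.IsHermitian)
    (x y : Fin n → ℝ) :
    x ⬝ᵥ y = ∑ j, (⇑(hA.eigenvectorBasis j) ⬝ᵥ y) * (x ⬝ᵥ ⇑(hA.eigenvectorBasis j)) := by
  conv_lhs => rw [expand_eigen hA y]
  rw [dot_sum_right]
  refine Finset.sum_congr rfl fun j _ => ?_
  rw [dotProduct_smul, smul_eq_mul]

lemma dot_self_expand {n : ℕ} {A : Matrix (Fin n) (Fin n) ℝ} (hA : A.IsHermitian)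
    (x : Fin n → ℝ) :
    x ⬝ᵥ x = ∑ j, (⇑(hA.eigenvectorBasis j) ⬝ᵥ x) ^ 2 := by
  rw [dot_right_expand hA x x]
  refine Finset.sum_congr rfl fun j _ => ?_
  rw [dotProduct_comm x, sq]

lemma trace_eq_sum_eig {n : ℕ} {A : Matrix (Fin n) (Fin n) ℝ} (hA : A.IsHermitian) :
    ∑ l, A l l = ∑ j, hA.eigenvalues j := by
  have h : A.trace = ∑ j, hA.eigenvalues j := by
    rw [hA.trace_eq_sum_eigenvalues]
    simp
  simpa [Matrix.trace, Matrix.diag] using h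

lemma rayleigh_le_diag {n : ℕ} {G : Matrix (Fin n) (Fin n) ℝ} (hG : G.PosSemidef)
    (a : Fin n → ℝ) (ha : a ⬝ᵥ a = 1) : a ⬝ᵥ G *ᵥ a ≤ ∑ l, G l l := by
  rw [dot_mulVec_expand hG.1 a, trace_eq_sum_eig hG.1]
  refine Finset.sum_le_sum (f := fun j => hG.1.eigenvalues j *
    (⇑(hG.1.eigenvectorBasis j) ⬝ᵥ a) ^ 2) (g := fun j => hG.1.eigenvalues j) (fun j _ => ?_)
  have h0 : 0 ≤ hG.1.eigenvalues j := hG.eigenvalues_nonneg j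
  have h1 : (⇑(hG.1.eigenvectorBasis j) ⬝ᵥ a) ^ 2 ≤ 1 := by
    rw [← ha, dot_self_expand hG.1 a]
    exact Finset.single_le_sum (f := fun i => (⇑(hG.1.eigenvectorBasis i) ⬝ᵥ a) ^ 2)
      (fun i _ => sq_nonneg _) (Finset.mem_univ j)
  exact mul_le_of_le_one_right h0 h1

lemma span_rayleigh_le {d k : ℕ} {B : Matrix (Fin d) (Fin d) ℝ} (hB : B.PosSemidef)
    (p : Fin k → EuclideanSpace ℝ (Fin d)) (hp : Orthonormal ℝ p)
    (u : EuclideanSpace ℝ (Fin d)) (hu : u ∈ Submodule.span ℝ (Set.range p))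
    (hnorm : (⇑u : Fin d → ℝ) ⬝ᵥ ⇑u = 1) :
    (⇑u : Fin d → ℝ) ⬝ᵥ B *ᵥ ⇑u ≤ ∑ l, (⇑(p l) : Fin d → ℝ) ⬝ᵥ B *ᵥ ⇑(p l) := by
  obtain ⟨a, hau⟩ := (mem_span_range_iff_exists_fun ℝ).mp hu
  set G : Matrix (Fin k) (Fin k) ℝ :=
    Matrix.of fun l m => (⇑(p l) : Fin d → ℝ) ⬝ᵥ B *ᵥ ⇑(p m) with hG
  have hGpsd : G.PosSemidef := by
    have h := hB.conjTranspose_mul_mul_same (Matrix.of fun x l => p l x : Matrix (Fin d) (Fin k) ℝ)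
    convert h using 1
    ext l m
    simp only [hG, Matrix.of_apply, Matrix.mul_apply, Matrix.conjTranspose_apply,
      dotProduct, Matrix.mulVec, star_trivial, Finset.sum_mul, Finset.mul_sum]
    rw [Finset.sum_comm]
    refine Finset.sum_congr rfl fun x _ => Finset.sum_congr rfl fun y _ => ?_
    show p l y * (B y x * p m x) = p l y * B y x * p m x
    ring
  have hcoe : (⇑u : Fin d → ℝ) = ∑ l, a l • (⇑(p l) : Fin d → ℝ) := by
    rw [← hau]; simp
  have ha1 : a ⬝ᵥ a = 1 := by
    have h2 := hp.inner_sum a a Finset.univ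
    rw [hau] at h2
    rw [EuclideanSpace.inner_eq_star_dotProduct] at h2
    simp only [star_trivial] at h2
    rw [hnorm] at h2
    simpa [dotProduct] using h2.symm
  have key : (⇑u : Fin d → ℝ) ⬝ᵥ B *ᵥ ⇑u = a ⬝ᵥ G *ᵥ a := by
    rw [hcoe]
    have hBm : B *ᵥ (∑ l, a l • (⇑(p l) : Fin d → ℝ)) = ∑ m, a m • (B *ᵥ ⇑(p m)) := by
      rw [mulVec_sum']
      exact Finset.sum_congr rfl fun m _ => Matrix.mulVec_smul B (a m) _
    rw [hBm, dot_sum_right]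
    simp only [dotProduct_smul, smul_eq_mul, dot_sum_left, smul_dotProduct]
    simp only [Finset.mul_sum, smul_eq_mul]
    rw [Finset.sum_comm]
    have hR : a ⬝ᵥ G *ᵥ a = ∑ l, ∑ m, a l * (G l m * a m) := by
      simp only [dotProduct, Matrix.mulVec, Finset.mul_sum]
    rw [hR]
    refine Finset.sum_congr rfl fun l _ => Finset.sum_congr rfl fun m _ => ?_
    show a m * (a l * _) = a l * (G l m * a m)
    rw [show G l m = (⇑(p l) : Fin d → ℝ) ⬝ᵥ B *ᵥ ⇑(p m) from rfl]
    ring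
  rw [key]
  calc a ⬝ᵥ G *ᵥ a ≤ ∑ l, G l l := rayleigh_le_diag hGpsd a ha1
    _ = ∑ l, (⇑(p l) : Fin d → ℝ) ⬝ᵥ B *ᵥ ⇑(p l) := rfl

lemma sum_mul_le_topk {d k : ℕ} (hkd : k ≤ d) (μ t : Fin d → ℝ)
    (hmono : ∀ j₁ j₂ : Fin d, j₁ ≤ j₂ → μ j₂ ≤ μ j₁)
    (ht0 : ∀ j, 0 ≤ t j) (ht1 : ∀ j, t j ≤ 1) (hsum : ∑ j, t j = (k : ℝ)) :
    ∑ j, μ j * t j ≤ ∑ i : Fin k, μ (Fin.castLE hkd i) := by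
  rcases Nat.eq_zero_or_pos k with hk | hk
  · subst hk
    have hz := (Finset.sum_eq_zero_iff_of_nonneg (fun j (_ : j ∈ Finset.univ) => ht0 j)).mp
      (by simpa using hsum)
    rw [Finset.sum_congr rfl (fun j hj => by rw [hz j hj, mul_zero])]
    simp
  · have hkd1 : k - 1 < d := by omega
    set c := μ ⟨k - 1, hkd1⟩ with hc
    have filt : Finset.univ.map (Fin.castLEEmb hkd)
        = Finset.univ.filter (fun j : Fin d => (j : ℕ) < k) := by
      ext j
      simp only [Finset.mem_map, Finset.mem_univ, true_and, Finset.mem_filter,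
        Fin.castLEEmb, Function.Embedding.coeFn_mk, Fin.ext_iff, Fin.coe_castLE]
      constructor
      · rintro ⟨i, hi⟩; omega
      · intro hj; exact ⟨⟨j, hj⟩, rfl⟩
    have hcard : (Finset.univ.filter (fun j : Fin d => (j : ℕ) < k)).card = k := by
      rw [← filt, Finset.card_map]; simp
    have hRHS : ∑ i : Fin k, μ (Fin.castLE hkd i)
        = ∑ j ∈ Finset.univ.filter (fun j : Fin d => (j : ℕ) < k), μ j := by
      rw [← filt, Finset.sum_map]; rfl
    have hstep : ∑ j, (μ j - c) * t j
        ≤ ∑ j ∈ Finset.univ.filter (fun j : Fin d => (j : ℕ) < k), (μ j - c) := by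
      rw [Finset.sum_filter]
      refine Finset.sum_le_sum (fun j _ => ?_)
      by_cases hj : (j : ℕ) < k
      · rw [if_pos hj]
        have hcle : c ≤ μ j := hmono j ⟨k - 1, hkd1⟩ (by simp [Fin.le_def]; omega)
        exact mul_le_of_le_one_right (by linarith) (ht1 j)
      · rw [if_neg hj]
        have hcle : μ j ≤ c := hmono ⟨k - 1, hkd1⟩ j (by simp [Fin.le_def]; omega)
        have := ht0 j
        nlinarith
    have e1 : ∑ j, μ j * t j = ∑ j, (μ j - c) * t j + c * k := by
      rw [← hsum, Finset.mul_sum, ← Finset.sum_add_distrib]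
      exact Finset.sum_congr rfl fun j _ => by ring
    have e2 : ∑ j ∈ Finset.univ.filter (fun j : Fin d => (j : ℕ) < k), (μ j - c)
        = (∑ i : Fin k, μ (Fin.castLE hkd i)) - c * k := by
      rw [Finset.sum_sub_distrib, Finset.sum_const, hcard, nsmul_eq_mul, hRHS]
      ring
    rw [e1]
    linarith

lemma exists_p {d k : ℕ} (hkd : k ≤ d) (u : Fin k → EuclideanSpace ℝ (Fin d)) :
    ∃ p : Fin k → EuclideanSpace ℝ (Fin d), Orthonormal ℝ p ∧
      ∀ i, u i ∈ Submodule.span ℝ (Set.range p) := by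
  set S := Submodule.span ℝ (Set.range u) with hS
  have hm : Module.finrank ℝ S ≤ k := by simpa [Set.finrank] using finrank_range_le_card (R := ℝ) u
  set m := Module.finrank ℝ S with hmdef
  have hmd : m ≤ d := le_trans hm hkd
  set cb := stdOrthonormalBasis ℝ S with hcb
  set v : Fin d → EuclideanSpace ℝ (Fin d) :=
    fun j => if h : (j : ℕ) < m then (cb ⟨j, h⟩ : EuclideanSpace ℝ (Fin d)) else 0 with hv
  set s : Set (Fin d) := {j : Fin d | (j : ℕ) < m} with hs
  have hvo : Orthonormal ℝ (s.restrict v) := by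
    rw [orthonormal_iff_ite]
    rintro ⟨i, hi⟩ ⟨j, hj⟩
    simp only [hs, Set.mem_setOf_eq] at hi hj
    simp only [Set.restrict_apply, hv, dif_pos hi, dif_pos hj]
    show inner ℝ (v i) (v j) = _
    simp only [hv, dif_pos hi, dif_pos hj]
    rw [← Submodule.coe_inner]
    rw [orthonormal_iff_ite.mp cb.orthonormal ⟨i, hi⟩ ⟨j, hj⟩]
    congr 1
    simp [Fin.ext_iff, Subtype.ext_iff]
  obtain ⟨b, hb⟩ := hvo.exists_orthonormalBasis_extension_of_card_eq (by simp)
  refine ⟨fun l => b (Fin.castLE hkd l),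
    b.orthonormal.comp _ (fun a b' hab => by simpa [Fin.ext_iff] using congrArg Fin.val hab), ?_⟩
  intro i
  have hin : u i ∈ S := Submodule.subset_span ⟨i, rfl⟩
  have h1 : Submodule.span ℝ
      (Set.range (fun j : Fin m => (cb j : EuclideanSpace ℝ (Fin d)))) = S := by
    have h2 := cb.toBasis.span_eq
    rw [cb.coe_toBasis] at h2
    calc Submodule.span ℝ (Set.range (fun j : Fin m => (cb j : EuclideanSpace ℝ (Fin d))))
        = Submodule.map S.subtype (Submodule.span ℝ (Set.range ⇑cb)) := by
          rw [Submodule.map_span]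
          congr 1
          rw [← Set.range_comp]
          rfl
      _ = Submodule.map S.subtype ⊤ := by rw [h2]
      _ = S := Submodule.map_subtype_top S
  have hSle : S ≤ Submodule.span ℝ (Set.range fun l : Fin k => b (Fin.castLE hkd l)) := by
    rw [← h1]
    apply Submodule.span_le.mpr
    rintro x ⟨j, rfl⟩
    have hjk : (j : ℕ) < k := lt_of_lt_of_le j.2 hm
    have hcb' : (cb j : EuclideanSpace ℝ (Fin d)) = b (Fin.castLE hkd ⟨(j : ℕ), hjk⟩) := by
      rw [hb (Fin.castLE hkd ⟨(j : ℕ), hjk⟩)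
        (show ((Fin.castLE hkd ⟨(j : ℕ), hjk⟩ : Fin d) : ℕ) < m from j.2)]
      simp only [hv]
      rw [dif_pos]
      · congr 1
      · exact j.2
    exact Submodule.subset_span ⟨⟨(j : ℕ), hjk⟩, hcb'.symm⟩
  exact hSle hin

lemma dot_eq_inner' {n : ℕ} (x y : EuclideanSpace ℝ (Fin n)) :
    (inner ℝ x y : ℝ) = (⇑x : Fin n → ℝ) ⬝ᵥ ⇑y := by
  rw [EuclideanSpace.inner_eq_star_dotProduct]
  rw [dotProduct_comm, star_trivial]

end helpers

theorem stmt_4 {d k : ℕ} (hkd : k ≤ d)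
    (M : Fin k → Matrix (Fin d) (Fin d) ℝ)
    (hpsd : ∀ i, (M i).PosSemidef)
    (hM : (∑ i, M i).IsHermitian) :
    ∑ i, kthEig (M i) (hpsd i).1 0 ≤ ∑ i : Fin k, kthEig (∑ j, M j) hM i := by
  rcases Nat.eq_zero_or_pos k with hk | hk
  · subst hk; simp
  have hd : 0 < d := lt_of_lt_of_le hk hkd
  obtain ⟨σ, hσ, hmono⟩ := sorted_spec hM
  set A := ∑ j, M j with hA
  set f : Fin d → ℝ := hM.eigenvalues with hf
  set w : Fin d → Fin d → ℝ := fun j => ⇑(hM.eigenvectorBasis j) with hw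
  choose σs hσs hmonos using fun i => sorted_spec (hpsd i).1
  set u : Fin k → EuclideanSpace ℝ (Fin d) :=
    fun i => (hpsd i).1.eigenvectorBasis (σs i ⟨0, hd⟩) with hu
  obtain ⟨p, hp, hup⟩ := exists_p hkd u
  have hnormu : ∀ i, (⇑(u i) : Fin d → ℝ) ⬝ᵥ ⇑(u i) = 1 := by
    intro i
    rw [← dot_eq_inner', real_inner_self_eq_norm_sq,
      (hpsd i).1.eigenvectorBasis.orthonormal.1 (σs i ⟨0, hd⟩)]
    norm_num
  have hlam : ∀ i, kthEig (M i) (hpsd i).1 0 = (⇑(u i) : Fin d → ℝ) ⬝ᵥ (M i) *ᵥ ⇑(u i) := by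
    intro i
    have he := (hpsd i).1.mulVec_eigenvectorBasis (σs i ⟨0, hd⟩)
    rw [hu]
    show kthEig (M i) (hpsd i).1 0 =
      (⇑((hpsd i).1.eigenvectorBasis (σs i ⟨0, hd⟩)) : Fin d → ℝ) ⬝ᵥ _
    rw [he, dotProduct_smul, smul_eq_mul]
    rw [show (⇑((hpsd i).1.eigenvectorBasis (σs i ⟨0, hd⟩)) : Fin d → ℝ) ⬝ᵥ
      ⇑((hpsd i).1.eigenvectorBasis (σs i ⟨0, hd⟩)) = 1 from hnormu i]
    rw [mul_one]
    exact hσs i ⟨0, hd⟩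
  set t : Fin d → ℝ := fun j => ∑ l, (w j ⬝ᵥ ⇑(p l)) ^ 2 with ht
  have step1 : ∑ i, kthEig (M i) (hpsd i).1 0
      ≤ ∑ l, (⇑(p l) : Fin d → ℝ) ⬝ᵥ A *ᵥ ⇑(p l) := by
    calc ∑ i, kthEig (M i) (hpsd i).1 0
        ≤ ∑ i, ∑ l, (⇑(p l) : Fin d → ℝ) ⬝ᵥ (M i) *ᵥ ⇑(p l) := by
          refine Finset.sum_le_sum (fun i _ => ?_)
          rw [hlam i]
          exact span_rayleigh_le (hpsd i) p hp (u i) (hup i) (hnormu i)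
      _ = ∑ l, ∑ i, (⇑(p l) : Fin d → ℝ) ⬝ᵥ (M i) *ᵥ ⇑(p l) := Finset.sum_comm
      _ = ∑ l, (⇑(p l) : Fin d → ℝ) ⬝ᵥ A *ᵥ ⇑(p l) := by
          refine Finset.sum_congr rfl fun l _ => ?_
          rw [hA, sum_mulVec', dot_sum_right]
  have step2 : ∑ l, (⇑(p l) : Fin d → ℝ) ⬝ᵥ A *ᵥ ⇑(p l) = ∑ j, f j * t j := by
    calc ∑ l, (⇑(p l) : Fin d → ℝ) ⬝ᵥ A *ᵥ ⇑(p l)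
        = ∑ l, ∑ j, f j * (w j ⬝ᵥ ⇑(p l)) ^ 2 := by
          exact Finset.sum_congr rfl fun l _ => dot_mulVec_expand hM _
      _ = ∑ j, ∑ l, f j * (w j ⬝ᵥ ⇑(p l)) ^ 2 := Finset.sum_comm
      _ = ∑ j, f j * t j := by
          refine Finset.sum_congr rfl fun j _ => ?_
          rw [ht, Finset.mul_sum]
  have ht0 : ∀ j, 0 ≤ t j := fun j => Finset.sum_nonneg fun l _ => sq_nonneg _
  have ht1 : ∀ j, t j ≤ 1 := by
    intro j
    have hb := hp.sum_inner_products_le (hM.eigenvectorBasis j) (s := Finset.univ)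
    have hn : ‖hM.eigenvectorBasis j‖ = 1 := hM.eigenvectorBasis.orthonormal.1 j
    rw [hn] at hb
    calc t j = ∑ l, ‖(inner ℝ (p l) (hM.eigenvectorBasis j) : ℝ)‖ ^ 2 := by
          refine Finset.sum_congr rfl fun l _ => ?_
          rw [dot_eq_inner', Real.norm_eq_abs, sq_abs, dotProduct_comm]
      _ ≤ 1 := by simpa using hb
  have htsum : ∑ j, t j = (k : ℝ) := by
    calc ∑ j, t j = ∑ l, ∑ j, (w j ⬝ᵥ ⇑(p l)) ^ 2 := Finset.sum_comm
      _ = ∑ l : Fin k, (1 : ℝ) := by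
          refine Finset.sum_congr rfl fun l _ => ?_
          rw [← dot_self_expand hM]
          rw [← dot_eq_inner']
          rw [real_inner_self_eq_norm_sq, hp.1 l]
          norm_num
      _ = (k : ℝ) := by simp
  have step3 : ∑ j, f j * t j = ∑ j, f (σ j) * t (σ j) :=
    (Equiv.sum_comp σ (fun j => f j * t j)).symm
  have step4 : ∑ j, f (σ j) * t (σ j)
      ≤ ∑ i : Fin k, kthEig A hM ((Fin.castLE hkd i : Fin d) : ℕ) := by
    have := sum_mul_le_topk hkd (fun j => kthEig A hM (j : ℕ)) (fun j => t (σ j))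
      hmono (fun j => ht0 _) (fun j => ht1 _)
      (by rw [← htsum]; exact Equiv.sum_comp σ t)
    calc ∑ j, f (σ j) * t (σ j) = ∑ j : Fin d, kthEig A hM ((j : Fin d) : ℕ) * t (σ j) := by
          refine Finset.sum_congr rfl fun j _ => ?_
          rw [hσ j]
      _ ≤ _ := this
  have hrhs : ∑ i : Fin k, kthEig A hM ((Fin.castLE hkd i : Fin d) : ℕ)
      = ∑ i : Fin k, kthEig A hM (i : ℕ) := by
    refine Finset.sum_congr rfl fun i _ => ?_
    congr 1
  calc ∑ i, kthEig (M i) (hpsd i).1 0 ≤ ∑ l, (⇑(p l) : Fin d → ℝ) ⬝ᵥ A *ᵥ ⇑(p l) := step1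
    _ = ∑ j, f j * t j := step2
    _ = ∑ j, f (σ j) * t (σ j) := step3
    _ ≤ ∑ i : Fin k, kthEig A hM ((Fin.castLE hkd i : Fin d) : ℕ) := step4
    _ = ∑ i : Fin k, kthEig A hM (i : ℕ) := hrhs
end

section
/- Let a, b > 0 and c, d ≥ 0 with c + d > 0. Then max{ √((a+b)² + c²) + d, c + √((a+b)² + d²) } > √(a² + c²) + √(b² + d²). -/
set_option maxHeartbeats 1600000

lemma aux_stmt7 (a b c d : ℝ) (ha : 0 < a) (hb : 0 < b) (hc : 0 ≤ c) (hd : 0 ≤ d)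
    (h : 2 * a * d < (a + 2 * b) * c) :
    Real.sqrt (a ^ 2 + c ^ 2) + Real.sqrt (b ^ 2 + d ^ 2) <
      c + Real.sqrt ((a + b) ^ 2 + d ^ 2) := by
  set p := Real.sqrt (a ^ 2 + c ^ 2) with hp
  set q := Real.sqrt (b ^ 2 + d ^ 2) with hq
  set s := Real.sqrt ((a + b) ^ 2 + d ^ 2) with hs
  have hp0 : 0 ≤ p := Real.sqrt_nonneg _
  have hq0 : 0 ≤ q := Real.sqrt_nonneg _
  have hs0 : 0 ≤ s := Real.sqrt_nonneg _
  have hp2 : p ^ 2 = a ^ 2 + c ^ 2 := Real.sq_sqrt (by positivity)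
  have hq2 : q ^ 2 = b ^ 2 + d ^ 2 := Real.sq_sqrt (by positivity)
  have hs2 : s ^ 2 = (a + b) ^ 2 + d ^ 2 := Real.sq_sqrt (by positivity)
  have hpa : a ≤ p := by nlinarith
  have hqb : b ≤ q := by nlinarith
  have hqbd : q ≤ b + d := by nlinarith
  have hsaq : s ≤ a + q := by nlinarith
  have hsq : 0 < s + q := by linarith
  have hpc : 0 < p + c := by linarith
  have k1 : a * s ≤ a * a + a * q := by nlinarith [mul_le_mul_of_nonneg_left hsaq ha.le]
  have k2 : a * q ≤ a * b + a * d := by nlinarith [mul_le_mul_of_nonneg_left hqbd ha.le]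
  have k3 : (a + 2 * b) * a ≤ (a + 2 * b) * p :=
    mul_le_mul_of_nonneg_left hpa (by linarith)
  have key : a * (s + q) < (a + 2 * b) * (p + c) := by nlinarith [k1, k2, k3]
  have key2 : a * a * (s + q) < a * (a + 2 * b) * (p + c) := by
    have := mul_lt_mul_of_pos_left key ha
    nlinarith [this]
  have e1 : (s - q) * (s + q) = a * (a + 2 * b) := by nlinarith
  have e2 : (p - c) * (p + c) = a * a := by nlinarith
  have h3 : ((s - q) - (p - c)) * ((s + q) * (p + c))
      = a * (a + 2 * b) * (p + c) - a * a * (s + q) := by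
    linear_combination (p + c) * e1 - (s + q) * e2
  have h4 : 0 < ((s - q) - (p - c)) * ((s + q) * (p + c)) := by rw [h3]; linarith
  have h5 : 0 < (s - q) - (p - c) := by
    by_contra h6
    push_neg at h6
    nlinarith [mul_pos hsq hpc, h4]
  linarith

theorem stmt_7 (a b c d : ℝ) (ha : 0 < a) (hb : 0 < b) (hc : 0 ≤ c) (hd : 0 ≤ d)
    (hcd : 0 < c + d) :
    Real.sqrt (a ^ 2 + c ^ 2) + Real.sqrt (b ^ 2 + d ^ 2) <
      max (Real.sqrt ((a + b) ^ 2 + c ^ 2) + d) (c + Real.sqrt ((a + b) ^ 2 + d ^ 2)) := by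
  rcases lt_or_ge (2 * a * d) ((a + 2 * b) * c) with h | h
  · exact lt_max_of_lt_right (aux_stmt7 a b c d ha hb hc hd h)
  · have h' : 2 * b * c < (b + 2 * a) * d := by
      by_contra h2
      push_neg at h2
      have hcz : c ≤ 0 := by
        nlinarith [mul_le_mul_of_nonneg_left h (by linarith : (0:ℝ) ≤ b + 2 * a),
          mul_le_mul_of_nonneg_left h2 (by linarith : (0:ℝ) ≤ 2 * a), mul_pos ha hb]
      have hdz : d ≤ 0 := by
        nlinarith [mul_le_mul_of_nonneg_left h (by linarith : (0:ℝ) ≤ 2 * b),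
          mul_le_mul_of_nonneg_left h2 (by linarith : (0:ℝ) ≤ a + 2 * b), mul_pos ha hb]
      linarith
    have := aux_stmt7 b a d c hb ha hd hc h'
    refine lt_max_of_lt_left ?_
    have hcomm : (b + a) = (a + b) := by ring
    rw [hcomm] at this
    linarith
end

section
/- Any maximizer (ν₁,...,ν_k) of ∑_{i=1}^k ‖ν_i‖₂ subject to ν_i ∈ R^d_+ and ∑_i ν_i = ν ∈ R^d_+ has the property that for every pair i ≠ j, either ν_iᵀ ν_j = 0, or both ν_i and ν_j have exactly one positive entry and it is in the same position. -/
open Finset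

/-- Euclidean norm of a vector in `ℝ^d`. -/
noncomputable def vnorm {d : ℕ} (v : Fin d → ℝ) : ℝ := Real.sqrt (∑ t, v t ^ 2)

lemma vnorm_split {d : ℕ} (s : Fin d) (v : Fin d → ℝ) :
    vnorm v = Real.sqrt (v s ^ 2 + ∑ t ∈ Finset.univ.erase s, v t ^ 2) := by
  rw [vnorm, ← Finset.add_sum_erase _ _ (Finset.mem_univ s)]

lemma sqrt_convex_le (A c l m : ℝ) (hA : 0 ≤ A) (hl : 0 ≤ l) (hm : 0 ≤ m)
    (hlm : l + m = 1) (hc : 0 ≤ c) :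
    Real.sqrt ((l * c) ^ 2 + A) ≤ l * Real.sqrt (c ^ 2 + A) + m * Real.sqrt A := by
  set S1 := Real.sqrt (c ^ 2 + A) with hS1
  set S0 := Real.sqrt A with hS0
  have h0 : 0 ≤ S0 := Real.sqrt_nonneg _
  have h1 : 0 ≤ S1 := Real.sqrt_nonneg _
  have e0 : S0 ^ 2 = A := Real.sq_sqrt hA
  have e1 : S1 ^ 2 = c ^ 2 + A := Real.sq_sqrt (by positivity)
  have h01 : S0 ≤ S1 := Real.sqrt_le_sqrt (by nlinarith)
  have hmul : A ≤ S1 * S0 := by nlinarith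
  have expand : (l * S1 + m * S0) ^ 2 = (l * c) ^ 2 + A + 2 * l * m * (S1 * S0 - A) := by
    linear_combination l ^ 2 * e1 + m ^ 2 * e0 + A * (l + m + 1) * hlm
  have key : (l * c) ^ 2 + A ≤ (l * S1 + m * S0) ^ 2 := by
    rw [expand]
    nlinarith [mul_nonneg (mul_nonneg hl hm) (by linarith : (0:ℝ) ≤ S1 * S0 - A)]
  calc Real.sqrt ((l * c) ^ 2 + A) ≤ Real.sqrt ((l * S1 + m * S0) ^ 2) :=
        Real.sqrt_le_sqrt key
    _ = l * S1 + m * S0 := Real.sqrt_sq (by positivity)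

lemma sqrt_convex_lt (A c l m : ℝ) (hA : 0 < A) (hl : 0 < l) (hm : 0 < m)
    (hlm : l + m = 1) (hc : 0 < c) :
    Real.sqrt ((l * c) ^ 2 + A) < l * Real.sqrt (c ^ 2 + A) + m * Real.sqrt A := by
  set S1 := Real.sqrt (c ^ 2 + A) with hS1
  set S0 := Real.sqrt A with hS0
  have h0 : 0 < S0 := Real.sqrt_pos.mpr hA
  have e0 : S0 ^ 2 = A := Real.sq_sqrt hA.le
  have e1 : S1 ^ 2 = c ^ 2 + A := Real.sq_sqrt (by positivity)
  have h01 : S0 < S1 := Real.sqrt_lt_sqrt hA.le (by nlinarith)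
  have hmul : A < S1 * S0 := by nlinarith
  have expand : (l * S1 + m * S0) ^ 2 = (l * c) ^ 2 + A + 2 * l * m * (S1 * S0 - A) := by
    linear_combination l ^ 2 * e1 + m ^ 2 * e0 + A * (l + m + 1) * hlm
  have key : (l * c) ^ 2 + A < (l * S1 + m * S0) ^ 2 := by
    rw [expand]
    nlinarith [mul_pos (mul_pos hl hm) (by linarith : (0:ℝ) < S1 * S0 - A)]
  calc Real.sqrt ((l * c) ^ 2 + A) < Real.sqrt ((l * S1 + m * S0) ^ 2) :=
        Real.sqrt_lt_sqrt (by positivity) key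
    _ = l * S1 + m * S0 := Real.sqrt_sq (by positivity)

lemma core (A B p q : ℝ) (hA : 0 ≤ A) (hB : 0 ≤ B) (hp : 0 < p) (hq : 0 < q)
    (hAB : 0 < A ∨ 0 < B)
    (h1 : Real.sqrt ((p + q) ^ 2 + A) + Real.sqrt B ≤
      Real.sqrt (p ^ 2 + A) + Real.sqrt (q ^ 2 + B))
    (h2 : Real.sqrt A + Real.sqrt ((p + q) ^ 2 + B) ≤
      Real.sqrt (p ^ 2 + A) + Real.sqrt (q ^ 2 + B)) :
    False := by
  have hc : 0 < p + q := by linarith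
  set lp := p / (p + q) with hlp
  set lq := q / (p + q) with hlq
  have hlp0 : 0 < lp := div_pos hp hc
  have hlq0 : 0 < lq := div_pos hq hc
  have hlpq : lp + lq = 1 := by
    rw [hlp, hlq, ← add_div, div_self hc.ne']
  have hpc : lp * (p + q) = p := by
    rw [hlp, div_mul_cancel₀ _ hc.ne']
  have hqc : lq * (p + q) = q := by
    rw [hlq, div_mul_cancel₀ _ hc.ne']
  have cA : Real.sqrt (p ^ 2 + A) ≤ lp * Real.sqrt ((p + q) ^ 2 + A) + lq * Real.sqrt A := by
    have := sqrt_convex_le A (p + q) lp lq hA hlp0.le hlq0.le hlpq hc.le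
    rwa [hpc] at this
  have cB : Real.sqrt (q ^ 2 + B) ≤ lq * Real.sqrt ((p + q) ^ 2 + B) + lp * Real.sqrt B := by
    have := sqrt_convex_le B (p + q) lq lp hB hlq0.le hlp0.le (by linarith) hc.le
    rwa [hqc] at this
  have cstrict : Real.sqrt (p ^ 2 + A) < lp * Real.sqrt ((p + q) ^ 2 + A) + lq * Real.sqrt A ∨
      Real.sqrt (q ^ 2 + B) < lq * Real.sqrt ((p + q) ^ 2 + B) + lp * Real.sqrt B := by
    rcases hAB with h | h
    · left
      have := sqrt_convex_lt A (p + q) lp lq h hlp0 hlq0 hlpq hc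
      rwa [hpc] at this
    · right
      have := sqrt_convex_lt B (p + q) lq lp h hlq0 hlp0 (by linarith) hc
      rwa [hqc] at this
  have m1 := mul_le_mul_of_nonneg_left h1 hlp0.le
  have m2 := mul_le_mul_of_nonneg_left h2 hlq0.le
  rw [mul_add, mul_add] at m1 m2
  have eX : lp * Real.sqrt (p ^ 2 + A) + lq * Real.sqrt (p ^ 2 + A) = Real.sqrt (p ^ 2 + A) := by
    rw [← add_mul, hlpq, one_mul]
  have eY : lp * Real.sqrt (q ^ 2 + B) + lq * Real.sqrt (q ^ 2 + B) = Real.sqrt (q ^ 2 + B) := by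
    rw [← add_mul, hlpq, one_mul]
  rcases cstrict with h | h
  · linarith [cB]
  · linarith [cA]

lemma move_le {d k : ℕ} (ν : Fin d → ℝ)
    (w : Fin k → Fin d → ℝ) (hw : ∀ i t, 0 ≤ w i t) (hsum : ∀ t, ∑ i, w i t = ν t)
    (hmax : ∀ v : Fin k → Fin d → ℝ, (∀ i t, 0 ≤ v i t) → (∀ t, ∑ i, v i t = ν t) →
      ∑ i, vnorm (v i) ≤ ∑ i, vnorm (w i))
    (i j : Fin k) (hij : i ≠ j) (s : Fin d) :
    Real.sqrt ((w i s + w j s) ^ 2 + ∑ t ∈ Finset.univ.erase s, (w i t) ^ 2)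
      + Real.sqrt (∑ t ∈ Finset.univ.erase s, (w j t) ^ 2)
      ≤ vnorm (w i) + vnorm (w j) := by
  classical
  set v : Fin k → Fin d → ℝ := fun r t =>
    if r = i then w i t + (if t = s then w j s else 0)
    else if r = j then w j t - (if t = s then w j s else 0)
    else w r t with hv
  have hvnn : ∀ r t, 0 ≤ v r t := by
    intro r t
    simp only [hv]
    by_cases hri : r = i
    · rw [if_pos hri]
      have h1 : (0:ℝ) ≤ if t = s then w j s else 0 := by
        by_cases hts : t = s
        · rw [if_pos hts]; exact hw j s
        · rw [if_neg hts]
      linarith [hw i t]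
    · rw [if_neg hri]
      by_cases hrj : r = j
      · rw [if_pos hrj]
        by_cases hts : t = s
        · subst hts; rw [if_pos rfl]; linarith [hw j t]
        · rw [if_neg hts]; linarith [hw j t]
      · rw [if_neg hrj]
        exact hw r t
  have hvsum : ∀ t, ∑ r, v r t = ν t := by
    intro t
    have hrw : ∀ r, v r t = w r t + ((if r = i then (if t = s then w j s else 0) else 0)
        + (if r = j then -(if t = s then w j s else 0) else 0)) := by
      intro r
      by_cases hri : r = i
      · simp [hv, hri, hij]
      · by_cases hrj : r = j
        · simp [hv, hri, hrj, Ne.symm hij]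
          ring
        · simp [hv, hri, hrj]
    rw [Finset.sum_congr rfl (fun r _ => hrw r), Finset.sum_add_distrib,
      Finset.sum_add_distrib, Finset.sum_ite_eq', Finset.sum_ite_eq']
    simp [hsum t]
  have hineq := hmax v hvnn hvsum
  have peel : ∀ f : Fin k → ℝ,
      ∑ r, f r = f i + f j + ∑ r ∈ (Finset.univ.erase i).erase j, f r := by
    intro f
    rw [← Finset.add_sum_erase _ f (Finset.mem_univ i),
      ← Finset.add_sum_erase _ f (Finset.mem_erase.mpr ⟨Ne.symm hij, Finset.mem_univ j⟩)]
    ring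
  have tail : ∑ r ∈ (Finset.univ.erase i).erase j, vnorm (v r)
      = ∑ r ∈ (Finset.univ.erase i).erase j, vnorm (w r) := by
    apply Finset.sum_congr rfl
    intro r hr
    have hrj : r ≠ j := (Finset.mem_erase.mp hr).1
    have hri : r ≠ i := (Finset.mem_erase.mp (Finset.mem_erase.mp hr).2).1
    simp [hv, hri, hrj]
  rw [peel (fun r => vnorm (v r)), peel (fun r => vnorm (w r)), tail] at hineq
  have hvi : vnorm (v i) = Real.sqrt ((w i s + w j s) ^ 2
      + ∑ t ∈ Finset.univ.erase s, (w i t) ^ 2) := by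
    rw [vnorm_split s]
    have e1 : v i s = w i s + w j s := by simp [hv]
    have e2 : ∑ t ∈ Finset.univ.erase s, (v i t) ^ 2
        = ∑ t ∈ Finset.univ.erase s, (w i t) ^ 2 := by
      apply Finset.sum_congr rfl
      intro t ht
      have hts : t ≠ s := (Finset.mem_erase.mp ht).1
      simp [hv, hts]
    rw [e1, e2]
  have hvj : vnorm (v j) = Real.sqrt (∑ t ∈ Finset.univ.erase s, (w j t) ^ 2) := by
    rw [vnorm_split s]
    have h1 : v j s = 0 := by simp [hv, Ne.symm hij]
    have h2 : ∑ t ∈ Finset.univ.erase s, (v j t) ^ 2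
        = ∑ t ∈ Finset.univ.erase s, (w j t) ^ 2 := by
      apply Finset.sum_congr rfl
      intro t ht
      have : t ≠ s := (Finset.mem_erase.mp ht).1
      simp [hv, this, Ne.symm hij]
    rw [h1, h2]
    norm_num
  rw [hvi, hvj] at hineq
  linarith

theorem stmt_9 {d k : ℕ} (ν : Fin d → ℝ) (hν : ∀ t, 0 ≤ ν t)
    (w : Fin k → Fin d → ℝ) (hw : ∀ i t, 0 ≤ w i t) (hsum : ∀ t, ∑ i, w i t = ν t)
    (hmax : ∀ v : Fin k → Fin d → ℝ, (∀ i t, 0 ≤ v i t) → (∀ t, ∑ i, v i t = ν t) →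
      ∑ i, vnorm (v i) ≤ ∑ i, vnorm (w i)) :
    ∀ i j, i ≠ j →
      (∑ t, w i t * w j t = 0) ∨
      (∃ ℓ : Fin d, 0 < w i ℓ ∧ 0 < w j ℓ ∧
        ∀ m : Fin d, m ≠ ℓ → w i m = 0 ∧ w j m = 0) := by
  intro i j hij
  by_cases h0 : ∑ t, w i t * w j t = 0
  · exact Or.inl h0
  right
  obtain ⟨s, -, hs⟩ := Finset.exists_ne_zero_of_sum_ne_zero h0
  have hi0 : w i s ≠ 0 := fun h => hs (by simp [h])
  have hj0 : w j s ≠ 0 := fun h => hs (by simp [h])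
  have hps : 0 < w i s := (hw i s).lt_of_ne (Ne.symm hi0)
  have hqs : 0 < w j s := (hw j s).lt_of_ne (Ne.symm hj0)
  refine ⟨s, hps, hqs, ?_⟩
  intro m hm
  by_contra hcon
  rw [not_and_or] at hcon
  set A := ∑ t ∈ Finset.univ.erase s, (w i t) ^ 2 with hA
  set B := ∑ t ∈ Finset.univ.erase s, (w j t) ^ 2 with hB
  have hA0 : 0 ≤ A := Finset.sum_nonneg fun t _ => sq_nonneg _
  have hB0 : 0 ≤ B := Finset.sum_nonneg fun t _ => sq_nonneg _
  have hmem : m ∈ Finset.univ.erase s := Finset.mem_erase.mpr ⟨hm, Finset.mem_univ m⟩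
  have hAB : 0 < A ∨ 0 < B := by
    rcases hcon with h | h
    · left
      exact Finset.sum_pos' (fun t _ => sq_nonneg _) ⟨m, hmem, by positivity⟩
    · right
      exact Finset.sum_pos' (fun t _ => sq_nonneg _) ⟨m, hmem, by positivity⟩
  have h1 := move_le ν w hw hsum hmax i j hij s
  have h2 := move_le ν w hw hsum hmax j i hij.symm s
  rw [vnorm_split s (w i), vnorm_split s (w j)] at h1 h2
  rw [add_comm (w j s) (w i s)] at h2
  exact core A B (w i s) (w j s) hA0 hB0 hps hqs hAB (by linarith) (by linarith)
end

section
/- Fix d ≥ 2 and k ≥ 2 with k ≤ d, and fix positive integers d₁,...,d_k summing to d that maximize √d₁ + ... + √d_k over all such integer compositions. Then for any vectors ν₁,...,ν_k ∈ R^d_+ with ∑_i ν_i = μ(1,...,1)ᵀ for some μ > 0, one has ∑_{i=1}^k ‖ν_i‖₂ ≤ μ(√d₁ + ... + √d_k). -/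
theorem stmt_10 {d k : ℕ} (hd : 2 ≤ d) (hk : 2 ≤ k) (hkd : k ≤ d)
    (ds : Fin k → ℕ) (hpos : ∀ i, 0 < ds i) (hsumd : ∑ i, ds i = d)
    (hmax : ∀ es : Fin k → ℕ, ∑ i, es i = d →
      ∑ i, Real.sqrt (es i) ≤ ∑ i, Real.sqrt (ds i))
    (μ : ℝ) (hμ : 0 < μ)
    (ν : Fin k → Fin d → ℝ) (hν : ∀ i t, 0 ≤ ν i t)
    (hsum : ∀ t, ∑ i, ν i t = μ) :
    ∑ i, vnorm (ν i) ≤ μ * ∑ i, Real.sqrt (ds i) := by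
  classical
  set S : Fin k → ℝ := fun i => ∑ t, ν i t ^ 2 with hS
  have hSnn : ∀ i, 0 ≤ S i := fun i => Finset.sum_nonneg fun t _ => sq_nonneg _
  set N : Fin k → ℝ := fun i => vnorm (ν i) with hN
  have hNnn : ∀ i, 0 ≤ N i := fun i => Real.sqrt_nonneg _
  have hN2 : ∀ i, N i ^ 2 = S i := fun i => Real.sq_sqrt (hSnn i)
  set u : Fin k → Fin d → ℝ := fun i t => if N i = 0 then 0 else ν i t / N i with hu
  have hunn : ∀ i t, 0 ≤ u i t := by
    intro i t; simp only [hu]; split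
    · exact le_refl 0
    · exact div_nonneg (hν i t) (hNnn i)
  have hrepr : ∀ i, N i = ∑ t, ν i t * u i t := by
    intro i
    by_cases h : N i = 0
    · simp [hu, h]
    · simp only [hu, if_neg h]
      have : ∑ t, ν i t * (ν i t / N i) = (∑ t, ν i t ^ 2) / N i := by
        rw [Finset.sum_div]
        exact Finset.sum_congr rfl fun t _ => by ring
      have h2 : (∑ t, ν i t ^ 2) = N i ^ 2 := (hN2 i).symm
      rw [this, h2, eq_div_iff h]
      ring
  have husq : ∀ i, ∑ t, u i t ^ 2 ≤ 1 := by
    intro i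
    by_cases h : N i = 0
    · simp [hu, h]
    · simp only [hu, if_neg h]
      have : ∑ t, (ν i t / N i) ^ 2 = (∑ t, ν i t ^ 2) / N i ^ 2 := by
        rw [Finset.sum_div]
        exact Finset.sum_congr rfl fun t _ => by rw [div_pow]
      have h2 : (∑ t, ν i t ^ 2) = N i ^ 2 := (hN2 i).symm
      rw [this, h2, div_self (pow_ne_zero 2 h)]
  have hex : ∀ t : Fin d, ∃ jt : Fin k, ∀ i, u i t ≤ u jt t := by
    intro t
    obtain ⟨jt, -, hj⟩ := Finset.exists_max_image Finset.univ (fun i => u i t)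
      ⟨⟨0, by omega⟩, Finset.mem_univ _⟩
    exact ⟨jt, fun i => hj i (Finset.mem_univ i)⟩
  choose j hj using hex
  have key : ∑ i, N i ≤ μ * ∑ t, u (j t) t := by
    calc ∑ i, N i = ∑ i, ∑ t, ν i t * u i t := Finset.sum_congr rfl fun i _ => hrepr i
    _ = ∑ t, ∑ i, ν i t * u i t := Finset.sum_comm
    _ ≤ ∑ t, μ * u (j t) t := Finset.sum_le_sum (fun t _ => by
        calc ∑ i, ν i t * u i t ≤ ∑ i, ν i t * u (j t) t :=
              Finset.sum_le_sum fun i _ => mul_le_mul_of_nonneg_left (hj t i) (hν i t)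
          _ = (∑ i, ν i t) * u (j t) t := (Finset.sum_mul _ _ _).symm
          _ = μ * u (j t) t := by rw [hsum t])
    _ = μ * ∑ t, u (j t) t := (Finset.mul_sum _ _ _).symm
  set e : Fin k → ℕ := fun i => (Finset.univ.filter (fun t => j t = i)).card with he
  have hesum : ∑ i, e i = d := by
    have := Finset.card_eq_sum_card_fiberwise
      (f := j) (s := Finset.univ) (t := Finset.univ) (fun t _ => Finset.mem_univ _)
    simpa [he] using this.symm
  have hfiber : ∀ i, ∑ t ∈ Finset.univ.filter (fun t => j t = i), u (j t) t
      ≤ Real.sqrt (e i) := by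
    intro i
    have h1 : ∑ t ∈ Finset.univ.filter (fun t => j t = i), u (j t) t
        = ∑ t ∈ Finset.univ.filter (fun t => j t = i), u i t := by
      refine Finset.sum_congr rfl fun t ht => ?_
      rw [(Finset.mem_filter.mp ht).2]
    rw [h1]
    have hnn : 0 ≤ ∑ t ∈ Finset.univ.filter (fun t => j t = i), u i t :=
      Finset.sum_nonneg fun t _ => hunn i t
    have hsq : (∑ t ∈ Finset.univ.filter (fun t => j t = i), u i t) ^ 2 ≤ (e i : ℝ) := by
      calc (∑ t ∈ Finset.univ.filter (fun t => j t = i), u i t) ^ 2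
          ≤ (e i : ℝ) * ∑ t ∈ Finset.univ.filter (fun t => j t = i), u i t ^ 2 :=
            sq_sum_le_card_mul_sum_sq
        _ ≤ (e i : ℝ) * 1 := by
            refine mul_le_mul_of_nonneg_left ?_ (Nat.cast_nonneg _)
            refine le_trans ?_ (husq i)
            exact Finset.sum_le_sum_of_subset_of_nonneg (Finset.filter_subset _ _)
              fun t _ _ => sq_nonneg _
        _ = (e i : ℝ) := mul_one _
    calc ∑ t ∈ Finset.univ.filter (fun t => j t = i), u i t
        = Real.sqrt ((∑ t ∈ Finset.univ.filter (fun t => j t = i), u i t) ^ 2) :=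
          (Real.sqrt_sq hnn).symm
      _ ≤ Real.sqrt (e i) := Real.sqrt_le_sqrt hsq
  have hstep : ∑ t, u (j t) t ≤ ∑ i, Real.sqrt (e i) := by
    rw [← Finset.sum_fiberwise_of_maps_to (g := j) (fun t _ => Finset.mem_univ (j t))
      (fun t => u (j t) t)]
    exact Finset.sum_le_sum fun i _ => hfiber i
  calc ∑ i, vnorm (ν i) = ∑ i, N i := rfl
    _ ≤ μ * ∑ t, u (j t) t := key
    _ ≤ μ * ∑ i, Real.sqrt (e i) := by
        exact mul_le_mul_of_nonneg_left hstep hμ.le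
    _ ≤ μ * ∑ i, Real.sqrt (ds i) :=
        mul_le_mul_of_nonneg_left (hmax e hesum) hμ.le
end

section
/- Let X be a random vector in the positive part of the unit sphere of R^d, x₁,...,x_k ∈ S (the positive unit sphere), and let (A₁,...,A_k) be the Voronoi partition A_i = {y ∈ S : x_iᵀy ≥ x_jᵀy ∀ j > i and x_iᵀy > x_jᵀy ∀ j < i}. Define x̄_i = E(X 1{X∈A_i}) / ‖E(X 1{X∈A_i})‖ (with x̄_i = x_i when P(X∈A_i) = 0). Then E(max_{i≤k} x_iᵀ X) ≤ E(max_{i≤k} x̄_iᵀ X). -/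
open MeasureTheory Matrix

/-- The Voronoi cell of the centroid `x i` among `x 1, …, x k` (ties broken in favour
of the smallest index), intersected with the positive unit sphere `S`. -/
def voronoiCell {d k : ℕ} (S : Set (Fin d → ℝ)) (x : Fin k → Fin d → ℝ) (i : Fin k) :
    Set (Fin d → ℝ) :=
  {y ∈ S | (∀ j, i < j → x j ⬝ᵥ y ≤ x i ⬝ᵥ y) ∧ (∀ j, j < i → x j ⬝ᵥ y < x i ⬝ᵥ y)}

lemma vc_cover {d k : ℕ} (hk : 0 < k) (S : Set (Fin d → ℝ)) (x : Fin k → Fin d → ℝ)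
    {y : Fin d → ℝ} (hy : y ∈ S) : ∃ i, y ∈ voronoiCell S x i := by
  have : Nonempty (Fin k) := ⟨⟨0, hk⟩⟩
  set f : Fin k → ℝ := fun j => x j ⬝ᵥ y with hf
  set T : Finset (Fin k) := Finset.univ.filter (fun j => ∀ j', f j' ≤ f j) with hT
  have hTne : T.Nonempty := by
    obtain ⟨j, _, hj⟩ := Finset.exists_max_image Finset.univ f ⟨Classical.arbitrary _, Finset.mem_univ _⟩
    exact ⟨j, by simp [hT, fun j' => hj j' (Finset.mem_univ _)]⟩
  set i := T.min' hTne with hi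
  have hiT : i ∈ T := T.min'_mem hTne
  have hmax : ∀ j', f j' ≤ f i := by simpa [hT] using hiT
  refine ⟨i, hy, fun j _ => hmax j, fun j hj => ?_⟩
  by_contra hlt
  push_neg at hlt
  have hjT : j ∈ T := by
    simp only [hT, Finset.mem_filter, Finset.mem_univ, true_and]
    exact fun j' => (hmax j').trans hlt
  exact absurd (T.min'_le j hjT) (not_le.mpr hj)

lemma vc_disj {d k : ℕ} (S : Set (Fin d → ℝ)) (x : Fin k → Fin d → ℝ)
    {i i' : Fin k} (h : i ≠ i') : Disjoint (voronoiCell S x i) (voronoiCell S x i') := by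
  rw [Set.disjoint_left]
  rintro y ⟨_, h1, h2⟩ ⟨_, h1', h2'⟩
  rcases lt_or_gt_of_ne h with hlt | hgt
  · exact absurd (h1 i' hlt) (not_le.mpr (h2' i hlt))
  · exact absurd (h1' i hgt) (not_le.mpr (h2 i' hgt))

lemma vc_meas {d k : ℕ} (S : Set (Fin d → ℝ)) (hS : MeasurableSet S)
    (x : Fin k → Fin d → ℝ) (i : Fin k) : MeasurableSet (voronoiCell S x i) := by
  have hdot : ∀ v : Fin d → ℝ, Measurable fun y : Fin d → ℝ => v ⬝ᵥ y := by
    intro v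
    unfold dotProduct
    exact Finset.measurable_sum _ fun t _ => (measurable_pi_apply t).const_mul _
  have : voronoiCell S x i = S ∩ ((⋂ j ∈ {j | i < j}, {y | x j ⬝ᵥ y ≤ x i ⬝ᵥ y}) ∩
      (⋂ j ∈ {j | j < i}, {y | x j ⬝ᵥ y < x i ⬝ᵥ y})) := by
    ext y; simp [voronoiCell, Set.mem_setOf_eq]; tauto
  rw [this]
  refine hS.inter (MeasurableSet.inter ?_ ?_) <;>
    refine MeasurableSet.biInter (Set.to_countable _) fun j _ => ?_
  · exact measurableSet_le (hdot _) (hdot _)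
  · exact measurableSet_lt (hdot _) (hdot _)

lemma dot_abs_le {d : ℕ} (w y : Fin d → ℝ) (hy : ∀ t, |y t| ≤ 1) :
    |w ⬝ᵥ y| ≤ ∑ t, |w t| :=
  calc |∑ t, w t * y t| ≤ ∑ t, |w t * y t| := Finset.abs_sum_le_sum_abs _ _
    _ ≤ ∑ t, |w t| := Finset.sum_le_sum fun t _ => by
        rw [abs_mul]; exact mul_le_of_le_one_right (abs_nonneg _) (hy t)

theorem stmt_12 {d k : ℕ} (hd : 2 ≤ d) (hk : 1 ≤ k) {Ω : Type*} [MeasureSpace Ω]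
    [IsProbabilityMeasure (volume : Measure Ω)]
    (S : Set (Fin d → ℝ)) (hSdef : S = {y | (∀ t, 0 ≤ y t) ∧ ∑ t, y t ^ 2 = 1})
    (X : Ω → Fin d → ℝ) (hXmeas : Measurable X) (hXS : ∀ᵐ ω, X ω ∈ S)
    (x : Fin k → Fin d → ℝ) (hx : ∀ i, x i ∈ S)
    (m : Fin k → Fin d → ℝ)
    (hm : ∀ i t, m i t = ∫ ω in {ω | X ω ∈ voronoiCell S x i}, X ω t)
    (xbar : Fin k → Fin d → ℝ)
    (hxbar0 : ∀ i, volume {ω | X ω ∈ voronoiCell S x i} = 0 → xbar i = x i)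
    (hxbar1 : ∀ i, volume {ω | X ω ∈ voronoiCell S x i} ≠ 0 →
      xbar i = (vnorm (m i))⁻¹ • m i) :
    ∫ ω, ⨆ i : Fin k, x i ⬝ᵥ X ω ≤ ∫ ω, ⨆ i : Fin k, xbar i ⬝ᵥ X ω := by
  haveI : Nonempty (Fin k) := ⟨⟨0, hk⟩⟩
  haveI : Inhabited (Fin k) := ⟨⟨0, hk⟩⟩
  set B : Fin k → Set Ω := fun i => {ω | X ω ∈ voronoiCell S x i} with hB
  -- measurability of S
  have hSmeas : MeasurableSet S := by
    rw [hSdef]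
    have h1 : MeasurableSet {y : Fin d → ℝ | ∀ t, 0 ≤ y t} := by
      rw [Set.setOf_forall]
      exact MeasurableSet.iInter fun t =>
        measurableSet_le measurable_const (measurable_pi_apply t)
    have h2 : MeasurableSet {y : Fin d → ℝ | ∑ t, y t ^ 2 = 1} :=
      measurableSet_eq_fun
        (Finset.measurable_sum _ fun t _ => (measurable_pi_apply t).pow_const 2)
        measurable_const
    exact (Set.setOf_and ▸ h1.inter h2)
  have hBmeas : ∀ i, MeasurableSet (B i) := fun i => hXmeas (vc_meas S hSmeas x i)
  have hBdisj : Pairwise (Function.onFun Disjoint B) := fun i j hij =>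
    Disjoint.preimage X (vc_disj S x hij)
  -- a.e. bounds on coordinates
  have hXb : ∀ᵐ ω, ∀ t, |X ω t| ≤ 1 := by
    filter_upwards [hXS] with ω hω
    rw [hSdef] at hω
    obtain ⟨h0, h1⟩ := hω
    intro t
    have hsq : X ω t ^ 2 ≤ 1 := by
      rw [← h1]
      exact Finset.single_le_sum (f := fun t => X ω t ^ 2)
        (fun t _ => sq_nonneg _) (Finset.mem_univ t)
    rw [abs_of_nonneg (h0 t)]
    nlinarith [h0 t]
  -- measurability and integrability of dot products
  have hdotmeas : ∀ v : Fin d → ℝ, Measurable fun ω => v ⬝ᵥ X ω := by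
    intro v
    unfold dotProduct
    exact Finset.measurable_sum _ fun t _ =>
      ((measurable_pi_apply t).comp hXmeas).const_mul _
  have hdotint : ∀ v : Fin d → ℝ, Integrable (fun ω => v ⬝ᵥ X ω) := by
    intro v
    refine Integrable.mono' (integrable_const (∑ t, |v t|))
      (hdotmeas v).aestronglyMeasurable ?_
    filter_upwards [hXb] with ω hω
    exact dot_abs_le v (X ω) hω
  have hsupint : ∀ v : Fin k → Fin d → ℝ, Integrable (fun ω => ⨆ i, v i ⬝ᵥ X ω) := by
    intro v
    have hsm : Measurable fun ω => ⨆ i, v i ⬝ᵥ X ω :=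
      Measurable.iSup fun i => hdotmeas (v i)
    refine Integrable.mono' (integrable_const (∑ i, ∑ t, |v i t|))
      hsm.aestronglyMeasurable ?_
    filter_upwards [hXb] with ω hω
    have hb : ∀ i, |v i ⬝ᵥ X ω| ≤ ∑ i, ∑ t, |v i t| := fun i =>
      (dot_abs_le (v i) (X ω) hω).trans
        (Finset.single_le_sum (f := fun i => ∑ t, |v i t|)
          (fun i _ => Finset.sum_nonneg fun t _ => abs_nonneg _) (Finset.mem_univ i))
    rw [Real.norm_eq_abs, abs_le]
    constructor
    · calc -(∑ i, ∑ t, |v i t|) ≤ v default ⬝ᵥ X ω := by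
            have := hb default; rw [abs_le] at this; exact this.1
        _ ≤ ⨆ i, v i ⬝ᵥ X ω := le_ciSup (f := fun i => v i ⬝ᵥ X ω) (Finite.bddAbove_range _) default
    · exact ciSup_le fun i => (le_abs_self _).trans (hb i)
  -- the cells cover Ω almost surely
  have hcompl : volume (⋃ i, B i)ᶜ = 0 := by
    have hae : ∀ᵐ ω, ω ∈ ⋃ i, B i := by
      filter_upwards [hXS] with ω hω
      obtain ⟨i, hi⟩ := vc_cover hk S x hω
      exact Set.mem_iUnion.mpr ⟨i, hi⟩
    exact ae_iff.mp hae
  -- decomposition of integrals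
  have hdecomp : ∀ f : Ω → ℝ, Integrable f → ∫ ω, f ω = ∑ i, ∫ ω in B i, f ω := by
    intro f hf
    rw [← integral_add_compl (MeasurableSet.iUnion hBmeas) hf,
      Measure.restrict_eq_zero.mpr hcompl, integral_zero_measure, add_zero,
      integral_iUnion_fintype hBmeas hBdisj fun i => hf.integrableOn]
  -- on B i, the sup over x equals the i-th term
  have hsup_eq : ∀ i : Fin k, ∀ ω ∈ B i, (⨆ j, x j ⬝ᵥ X ω) = x i ⬝ᵥ X ω := by
    intro i ω hω
    obtain ⟨_, h1, h2⟩ := hω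
    refine le_antisymm (ciSup_le fun j => ?_) (le_ciSup (f := fun j => x j ⬝ᵥ X ω) (Finite.bddAbove_range _) i)
    rcases lt_trichotomy i j with h | h | h
    · exact h1 j h
    · rw [h]
    · exact (h2 j h).le
  -- set integrals of dot products
  have hint_dot : ∀ (v : Fin d → ℝ) (i : Fin k), ∫ ω in B i, v ⬝ᵥ X ω = v ⬝ᵥ m i := by
    intro v i
    have hcoord : ∀ t : Fin d, IntegrableOn (fun ω => v t * X ω t) (B i) := by
      intro t
      refine ((Integrable.mono' (integrable_const 1)
        (((measurable_pi_apply t).comp hXmeas)).aestronglyMeasurable ?_).const_mul (v t)).integrableOn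
      filter_upwards [hXb] with ω hω using hω t
    calc ∫ ω in B i, v ⬝ᵥ X ω = ∫ ω in B i, ∑ t, v t * X ω t := rfl
      _ = ∑ t, ∫ ω in B i, v t * X ω t := integral_finset_sum _ fun t _ => hcoord t
      _ = ∑ t, v t * m i t := by
          refine Finset.sum_congr rfl fun t _ => ?_
          rw [integral_const_mul, hm i t]
      _ = v ⬝ᵥ m i := rfl
  -- the key inequality per cell
  have key : ∀ i : Fin k, x i ⬝ᵥ m i ≤ xbar i ⬝ᵥ m i := by
    intro i
    by_cases h0 : volume (B i) = 0
    · have hm0 : m i = 0 := funext fun t => by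
        rw [hm i t, Measure.restrict_eq_zero.mpr h0, integral_zero_measure]; rfl
      rw [hm0, dotProduct_zero, dotProduct_zero]
    · -- coordinates of m i are nonnegative and their sum is positive
      have hcoord : ∀ t : Fin d, IntegrableOn (fun ω => X ω t) (B i) := fun t =>
        (Integrable.mono' (integrable_const 1)
          ((measurable_pi_apply t).comp hXmeas).aestronglyMeasurable
          (by filter_upwards [hXb] with ω hω using hω t)).integrableOn
      have hsum1 : ∀ᵐ ω, (1 : ℝ) ≤ ∑ t, X ω t := by
        filter_upwards [hXS] with ω hω
        rw [hSdef] at hω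
        obtain ⟨hnn, h1⟩ := hω
        calc (1 : ℝ) = ∑ t, X ω t ^ 2 := h1.symm
          _ ≤ ∑ t, X ω t := by
              refine Finset.sum_le_sum fun t _ => ?_
              have hle : X ω t ^ 2 ≤ 1 := by
                rw [← h1]
                exact Finset.single_le_sum (f := fun t => X ω t ^ 2)
                  (fun _ _ => sq_nonneg _) (Finset.mem_univ t)
              nlinarith [hnn t]
      have hsump : 0 < ∑ t, m i t := by
        have hInt : IntegrableOn (fun ω => ∑ t, X ω t) (B i) :=
          integrable_finset_sum _ fun t _ => hcoord t
        have h1i : ∫ ω in B i, (1 : ℝ) ≤ ∫ ω in B i, ∑ t, X ω t :=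
          integral_mono_ae (integrable_const 1) hInt (ae_restrict_of_ae hsum1)
        have hconst : ∫ ω in B i, (1 : ℝ) = (volume (B i)).toReal := by
          simp [setIntegral_const, measureReal_def]
        have h2 : ∫ ω in B i, ∑ t, X ω t = ∑ t, m i t := by
          rw [integral_finset_sum _ fun t _ => hcoord t]
          exact Finset.sum_congr rfl fun t _ => (hm i t).symm
        have hp : 0 < (volume (B i)).toReal :=
          ENNReal.toReal_pos h0 (measure_ne_top _ _)
        rw [hconst, h2] at h1i
        linarith
      obtain ⟨t0, _, ht0⟩ := Finset.exists_lt_of_sum_lt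
        (show ∑ t : Fin d, (0 : ℝ) < ∑ t, m i t by simpa using hsump)
      have hsq : 0 < ∑ t, m i t ^ 2 :=
        Finset.sum_pos' (fun t _ => sq_nonneg _) ⟨t0, Finset.mem_univ _, by positivity⟩
      have hv : 0 < vnorm (m i) := Real.sqrt_pos.mpr hsq
      have hdd : m i ⬝ᵥ m i = vnorm (m i) ^ 2 := by
        rw [vnorm, Real.sq_sqrt (Finset.sum_nonneg fun t _ => sq_nonneg _)]
        simp [dotProduct, sq]
      have hcs : x i ⬝ᵥ m i ≤ vnorm (m i) := by
        have h := Real.sum_mul_le_sqrt_mul_sqrt Finset.univ (x i) (m i)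
        have hx1 : Real.sqrt (∑ t, x i t ^ 2) = 1 := by
          have hxi := hx i
          rw [hSdef] at hxi
          rw [hxi.2, Real.sqrt_one]
        calc x i ⬝ᵥ m i = ∑ t, x i t * m i t := rfl
          _ ≤ Real.sqrt (∑ t, x i t ^ 2) * Real.sqrt (∑ t, m i t ^ 2) := h
          _ = vnorm (m i) := by rw [hx1, one_mul]; rfl
      rw [hxbar1 i h0, smul_dotProduct, smul_eq_mul, hdd]
      calc x i ⬝ᵥ m i ≤ vnorm (m i) := hcs
        _ = (vnorm (m i))⁻¹ * vnorm (m i) ^ 2 := by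
            rw [pow_two, ← mul_assoc, inv_mul_cancel₀ hv.ne', one_mul]
  -- final chain
  calc ∫ ω, ⨆ i, x i ⬝ᵥ X ω = ∑ i, ∫ ω in B i, ⨆ j, x j ⬝ᵥ X ω := hdecomp _ (hsupint x)
    _ = ∑ i, ∫ ω in B i, x i ⬝ᵥ X ω := Finset.sum_congr rfl fun i _ =>
        setIntegral_congr_fun (hBmeas i) (fun ω hω => hsup_eq i ω hω)
    _ = ∑ i, x i ⬝ᵥ m i := Finset.sum_congr rfl fun i _ => hint_dot (x i) i
    _ ≤ ∑ i, xbar i ⬝ᵥ m i := Finset.sum_le_sum fun i _ => key i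
    _ = ∑ i, ∫ ω in B i, xbar i ⬝ᵥ X ω :=
        Finset.sum_congr rfl fun i _ => (hint_dot (xbar i) i).symm
    _ ≤ ∑ i, ∫ ω in B i, ⨆ j, xbar j ⬝ᵥ X ω := Finset.sum_le_sum fun i _ =>
        integral_mono (hdotint (xbar i)).integrableOn (hsupint xbar).integrableOn
          (fun ω => le_ciSup (f := fun j => xbar j ⬝ᵥ X ω) (Finite.bddAbove_range _) i)
    _ = ∫ ω, ⨆ i, xbar i ⬝ᵥ X ω := (hdecomp _ (hsupint xbar)).symm
end

section
/- Let X be a random vector in the positive part S of the unit sphere of R^d, let x₁,...,x_k ∈ S, let (A₁,...,A_k) be the associated Voronoi partition of S, and set Σ_i = E(X Xᵀ 1{X∈A_i}). Let x̂_i ∈ S be a nonnegative unit-norm eigenvector of Σ_i for its largest eigenvalue (which exists by Perron–Frobenius). Then E(max_{i≤k} (x_iᵀX)²) ≤ ∑_{i=1}^k λ₁(Σ_i) ≤ E(max_{i≤k} (x̂_iᵀX)²). -/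
open MeasureTheory Matrix

lemma eig_le_kthEig_zero {d : ℕ} {A : Matrix (Fin d) (Fin d) ℝ} (hA : A.IsHermitian)
    (j : Fin d) : hA.eigenvalues j ≤ kthEig A hA 0 := by
  unfold kthEig
  have hperm := List.mergeSort_perm (List.ofFn hA.eigenvalues) (fun a b => decide (b ≤ a))
  have hsorted := List.pairwise_mergeSort (le := fun a b : ℝ => decide (b ≤ a))
    (by intro a b c; simp only [decide_eq_true_eq]; intro h1 h2; linarith)
    (by intro a b; simpa using le_total b a) (List.ofFn hA.eigenvalues)
  have hmem : hA.eigenvalues j ∈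
      (List.ofFn hA.eigenvalues).mergeSort (fun a b => decide (b ≤ a)) :=
    hperm.mem_iff.2 (by simp [List.mem_ofFn])
  cases h : (List.ofFn hA.eigenvalues).mergeSort (fun a b => decide (b ≤ a)) with
  | nil => rw [h] at hmem; simp at hmem
  | cons a t =>
    rw [h] at hmem hsorted
    simp only [List.getD_cons_zero]
    rcases List.mem_cons.1 hmem with h' | h'
    · exact le_of_eq h'
    · have := (List.pairwise_cons.1 hsorted).1 _ h'
      simpa using this

lemma rayleigh_le_kthEig {d : ℕ} {A : Matrix (Fin d) (Fin d) ℝ} (hA : A.IsHermitian)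
    {y : Fin d → ℝ} (hy : ∑ t, y t ^ 2 = 1) :
    y ⬝ᵥ (A *ᵥ y) ≤ kthEig A hA 0 := by
  classical
  set b := hA.eigenvectorBasis with hb
  set y' : EuclideanSpace ℝ (Fin d) := (WithLp.equiv 2 _).symm y with hy'
  set z' : EuclideanSpace ℝ (Fin d) := (WithLp.equiv 2 _).symm (A *ᵥ y) with hz'
  have hAt : Aᵀ = A := by
    have := hA; rwa [Matrix.IsHermitian, conjTranspose_eq_transpose_of_trivial] at this
  have key : ∀ j, (inner ℝ (b j) z' : ℝ) = hA.eigenvalues j * inner ℝ (b j) y' := by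
    intro j
    have h1 : (inner ℝ (b j) z' : ℝ) = (⇑(b j) : Fin d → ℝ) ⬝ᵥ (A *ᵥ y) := by
      simp [PiLp.inner_apply, dotProduct, z', mul_comm]
    have h2 : (⇑(b j) : Fin d → ℝ) ⬝ᵥ (A *ᵥ y) = (A *ᵥ ⇑(b j)) ⬝ᵥ y := by
      rw [dotProduct_mulVec, ← Matrix.mulVec_transpose, hAt]
    have h3 : A *ᵥ ⇑(b j) = hA.eigenvalues j • ⇑(b j) := hA.mulVec_eigenvectorBasis j
    rw [h1, h2, h3, smul_dotProduct]
    congr 1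
    simp [PiLp.inner_apply, dotProduct, y', mul_comm]

  have hsum : y ⬝ᵥ (A *ᵥ y) = ∑ j, (inner ℝ y' (b j) : ℝ) * inner ℝ (b j) z' := by
    rw [b.sum_inner_mul_inner y' z']
    simp [PiLp.inner_apply, dotProduct, y', z', mul_comm]
  have hnorm : ∑ j, (inner ℝ y' (b j) : ℝ) * inner ℝ (b j) y' = 1 := by
    rw [b.sum_inner_mul_inner y' y']
    rw [PiLp.inner_apply]
    simpa [y', sq] using hy
  calc y ⬝ᵥ (A *ᵥ y) = ∑ j, hA.eigenvalues j * ((inner ℝ y' (b j) : ℝ) * inner ℝ (b j) y') := by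
        rw [hsum]; exact Finset.sum_congr rfl fun j _ => by rw [key j]; ring
    _ ≤ ∑ j, kthEig A hA 0 * ((inner ℝ y' (b j) : ℝ) * inner ℝ (b j) y') := by
        apply Finset.sum_le_sum
        intro j _
        have h0 : (0:ℝ) ≤ (inner ℝ y' (b j) : ℝ) * inner ℝ (b j) y' := by
          rw [real_inner_comm y' (b j)]; exact mul_self_nonneg _
        exact mul_le_mul_of_nonneg_right (eig_le_kthEig_zero hA j) h0
    _ = kthEig A hA 0 := by rw [← Finset.mul_sum, hnorm, mul_one]

theorem stmt_13 {d k : ℕ} (hd : 2 ≤ d) (hk : 1 ≤ k) {Ω : Type*} [MeasureSpace Ω]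
    [IsProbabilityMeasure (volume : Measure Ω)]
    (S : Set (Fin d → ℝ)) (hSdef : S = {y | (∀ t, 0 ≤ y t) ∧ ∑ t, y t ^ 2 = 1})
    (X : Ω → Fin d → ℝ) (hXmeas : Measurable X) (hXS : ∀ᵐ ω, X ω ∈ S)
    (x : Fin k → Fin d → ℝ) (hx : ∀ i, x i ∈ S)
    (Sig : Fin k → Matrix (Fin d) (Fin d) ℝ)
    (hSig : ∀ i, Sig i =
      Matrix.of fun s t => ∫ ω in {ω | X ω ∈ voronoiCell S x i}, X ω s * X ω t)
    (hherm : ∀ i, (Sig i).IsHermitian)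
    (xhat : Fin k → Fin d → ℝ) (hxhatS : ∀ i, xhat i ∈ S)
    (hxhat : ∀ i, (Sig i) *ᵥ xhat i = kthEig (Sig i) (hherm i) 0 • xhat i) :
    (∫ ω, ⨆ i : Fin k, (x i ⬝ᵥ X ω) ^ 2) ≤ ∑ i, kthEig (Sig i) (hherm i) 0 ∧
      ∑ i, kthEig (Sig i) (hherm i) 0 ≤ ∫ ω, ⨆ i : Fin k, (xhat i ⬝ᵥ X ω) ^ 2 := by
  classical
  haveI hne : Nonempty (Fin k) := ⟨⟨0, hk⟩⟩
  -- basic facts about S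
  have hS1 : ∀ y ∈ S, ∀ t, 0 ≤ y t ∧ y t ≤ 1 := by
    intro y hy t
    rw [hSdef] at hy
    obtain ⟨h0, h1⟩ := hy
    refine ⟨h0 t, ?_⟩
    have hle : y t ^ 2 ≤ 1 := by
      rw [← h1]
      exact Finset.single_le_sum (fun s _ => sq_nonneg (y s)) (Finset.mem_univ t)
    nlinarith [h0 t]
  have hunit : ∀ y ∈ S, ∑ t, y t ^ 2 = 1 := by
    intro y hy; rw [hSdef] at hy; exact hy.2
  have hdot : ∀ y ∈ S, ∀ z ∈ S, 0 ≤ y ⬝ᵥ z ∧ y ⬝ᵥ z ≤ (d : ℝ) := by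
    intro y hy z hz
    constructor
    · exact Finset.sum_nonneg fun t _ => mul_nonneg (hS1 y hy t).1 (hS1 z hz t).1
    · calc y ⬝ᵥ z = ∑ t, y t * z t := rfl
        _ ≤ ∑ _t : Fin d, (1:ℝ) := Finset.sum_le_sum fun t _ => by
              have h1 := hS1 y hy t; have h2 := hS1 z hz t; nlinarith [h1.1, h1.2, h2.1, h2.2]
        _ = (d : ℝ) := by simp
  have hdotsq : ∀ y ∈ S, ∀ z ∈ S, (y ⬝ᵥ z) ^ 2 ≤ (d:ℝ)^2 := by
    intro y hy z hz
    obtain ⟨h0, h1⟩ := hdot y hy z hz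
    exact pow_le_pow_left₀ h0 h1 2
  -- measurability
  have hdotmeas : ∀ v : Fin d → ℝ, Measurable fun ω => v ⬝ᵥ X ω := by
    intro v
    simp only [dotProduct]
    exact Finset.measurable_sum _ fun t _ =>
      measurable_const.mul ((measurable_pi_apply t).comp hXmeas)
  have hXSmeas : MeasurableSet {ω | X ω ∈ S} := by
    rw [hSdef]
    have heq : {ω | X ω ∈ {y : Fin d → ℝ | (∀ t, 0 ≤ y t) ∧ ∑ t, y t ^ 2 = 1}}
        = (⋂ t, {ω | 0 ≤ X ω t}) ∩ {ω | ∑ t, X ω t ^ 2 = 1} := by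
      ext ω; simp [Set.mem_iInter]
    rw [heq]
    refine (MeasurableSet.iInter fun t => ?_).inter ?_
    · exact measurableSet_le measurable_const ((measurable_pi_apply t).comp hXmeas)
    · exact measurableSet_eq_fun
        (Finset.measurable_sum _ fun t _ => ((measurable_pi_apply t).comp hXmeas).pow_const 2)
        measurable_const
  set A : Fin k → Set Ω := fun i => {ω | X ω ∈ voronoiCell S x i} with hAdef
  have hAmeas : ∀ i, MeasurableSet (A i) := by
    intro i
    have heq : A i = {ω | X ω ∈ S} ∩
        ((⋂ j, ⋂ _ : i < j, {ω | x j ⬝ᵥ X ω ≤ x i ⬝ᵥ X ω}) ∩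
          (⋂ j, ⋂ _ : j < i, {ω | x j ⬝ᵥ X ω < x i ⬝ᵥ X ω})) := by
      ext ω
      simp only [hAdef, voronoiCell, Set.mem_setOf_eq, Set.mem_inter_iff, Set.mem_iInter]
    rw [heq]
    exact hXSmeas.inter
      ((MeasurableSet.iInter fun j => MeasurableSet.iInter fun _ =>
          measurableSet_le (hdotmeas _) (hdotmeas _)).inter
        (MeasurableSet.iInter fun j => MeasurableSet.iInter fun _ =>
          measurableSet_lt (hdotmeas _) (hdotmeas _)))
  -- pairwise disjoint
  have hdisj : Pairwise (Function.onFun Disjoint A) := by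
    intro i j hij
    rw [Function.onFun, Set.disjoint_left]
    intro ω hi hj
    simp only [hAdef, voronoiCell, Set.mem_setOf_eq] at hi hj
    rcases hij.lt_or_gt with h | h
    · have h1 := hi.2.1 j h
      have h2 := hj.2.2 i h
      linarith
    · have h1 := hj.2.1 i h
      have h2 := hi.2.2 j h
      linarith
  -- cover
  have hcover : ∀ y ∈ S, ∃ i, y ∈ voronoiCell S x i := by
    intro y hy
    obtain ⟨m, -, hm⟩ := Finset.exists_max_image (Finset.univ : Finset (Fin k))
      (fun j => x j ⬝ᵥ y) ⟨⟨0, hk⟩, Finset.mem_univ _⟩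
    set T := Finset.univ.filter (fun j => x m ⬝ᵥ y ≤ x j ⬝ᵥ y) with hT
    have hTne : T.Nonempty := ⟨m, by simp [hT]⟩
    set i := T.min' hTne with hi
    have hiT : i ∈ T := T.min'_mem hTne
    have hile : x m ⬝ᵥ y ≤ x i ⬝ᵥ y := by
      have := hiT; rw [hT, Finset.mem_filter] at this; exact this.2
    have hieq : x i ⬝ᵥ y = x m ⬝ᵥ y := le_antisymm (hm i (Finset.mem_univ i)) hile
    refine ⟨i, hy, fun j _ => ?_, fun j hj => ?_⟩
    · rw [hieq]; exact hm j (Finset.mem_univ j)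
    · by_contra hcon
      push_neg at hcon
      have hjT : j ∈ T := by
        rw [hT, Finset.mem_filter]
        exact ⟨Finset.mem_univ j, by rw [← hieq]; exact hcon⟩
      exact absurd (T.min'_le j hjT) (not_le.2 hj)
  -- union has full measure
  have hUnull : volume (⋃ i, A i)ᶜ = 0 := by
    apply measure_mono_null (t := {ω | X ω ∉ S})
    · intro ω hω
      simp only [Set.mem_compl_iff, Set.mem_iUnion, not_exists] at hω
      intro hS'
      obtain ⟨i, hi⟩ := hcover _ hS'
      exact hω i hi
    · exact ae_iff.1 hXS
  -- integrability
  have hint : ∀ v ∈ S, Integrable (fun ω => (v ⬝ᵥ X ω) ^ 2) := by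
    intro v hv
    apply Integrable.mono' (integrable_const ((d:ℝ)^2))
      (((hdotmeas v).pow_const 2).aestronglyMeasurable)
    filter_upwards [hXS] with ω hω
    rw [Real.norm_eq_abs, abs_of_nonneg (sq_nonneg _)]
    exact hdotsq v hv _ hω
  have hentry : ∀ (s t : Fin d) (B : Set Ω),
      Integrable (fun ω => X ω s * X ω t) (volume.restrict B) := by
    intro s t B
    apply Integrable.mono' (integrable_const (1:ℝ))
      ((((measurable_pi_apply s).comp hXmeas).mul
        ((measurable_pi_apply t).comp hXmeas)).aestronglyMeasurable)
    apply ae_restrict_of_ae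
    filter_upwards [hXS] with ω hω
    show ‖X ω s * X ω t‖ ≤ 1
    rw [Real.norm_eq_abs, abs_mul]
    have h1 := hS1 _ hω s; have h2 := hS1 _ hω t
    rw [abs_of_nonneg h1.1, abs_of_nonneg h2.1]
    exact mul_le_one₀ h1.2 h2.1 h2.2
  -- quadratic form identity
  have hquad : ∀ i (v : Fin d → ℝ), v ⬝ᵥ (Sig i *ᵥ v) = ∫ ω in A i, (v ⬝ᵥ X ω) ^ 2 := by
    intro i v
    have hrw : ∀ ω : Ω, (v ⬝ᵥ X ω) ^ 2 = ∑ s, ∑ t, v s * v t * (X ω s * X ω t) := by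
      intro ω
      rw [sq, dotProduct, Finset.sum_mul_sum]
      exact Finset.sum_congr rfl fun s _ => Finset.sum_congr rfl fun t _ => by ring
    calc v ⬝ᵥ (Sig i *ᵥ v)
        = ∑ s, ∑ t, v s * v t * ∫ ω in A i, X ω s * X ω t := by
          rw [hSig i]
          simp only [dotProduct, Matrix.mulVec, Matrix.of_apply, dotProduct]
          refine Finset.sum_congr rfl fun s _ => ?_
          rw [Finset.mul_sum]
          exact Finset.sum_congr rfl fun t _ => by ring
      _ = ∑ s, ∑ t, ∫ ω in A i, v s * v t * (X ω s * X ω t) := by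
          exact Finset.sum_congr rfl fun s _ => Finset.sum_congr rfl fun t _ =>
            (integral_const_mul _ _).symm
      _ = ∫ ω in A i, ∑ s, ∑ t, v s * v t * (X ω s * X ω t) := by
          rw [integral_finset_sum _ fun s _ =>
            integrable_finset_sum _ fun t _ => (hentry s t _).const_mul _]
          exact Finset.sum_congr rfl fun s _ =>
            (integral_finset_sum _ fun t _ => (hentry s t _).const_mul _).symm
      _ = ∫ ω in A i, (v ⬝ᵥ X ω) ^ 2 :=
          integral_congr_ae (Filter.Eventually.of_forall fun ω => (hrw ω).symm)
  -- sup measurability and integrability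
  have hsupMeas : ∀ v : Fin k → Fin d → ℝ,
      Measurable fun ω => ⨆ i, (v i ⬝ᵥ X ω) ^ 2 := by
    intro v
    have h2 : Measurable (Finset.univ.sup' Finset.univ_nonempty
        (fun i => fun ω => (v i ⬝ᵥ X ω) ^ 2)) :=
      Finset.measurable_sup' _ fun i _ => ((hdotmeas (v i)).pow_const 2)
    have h3 : (Finset.univ.sup' Finset.univ_nonempty (fun i => fun ω => (v i ⬝ᵥ X ω) ^ 2))
        = fun ω => ⨆ i, (v i ⬝ᵥ X ω) ^ 2 := by
      funext ω
      rw [Finset.sup'_apply, Finset.sup'_univ_eq_ciSup]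
    rwa [h3] at h2
  have hbdd : ∀ (v : Fin k → Fin d → ℝ) (ω : Ω), BddAbove (Set.range fun i => (v i ⬝ᵥ X ω)^2) :=
    fun v ω => Set.Finite.bddAbove (Set.finite_range _)
  have hsupInt : ∀ v : Fin k → Fin d → ℝ, (∀ i, v i ∈ S) →
      Integrable (fun ω => ⨆ i, (v i ⬝ᵥ X ω) ^ 2) := by
    intro v hv
    apply Integrable.mono' (integrable_const ((d:ℝ)^2)) (hsupMeas v).aestronglyMeasurable
    filter_upwards [hXS] with ω hω
    have hnn : (0:ℝ) ≤ ⨆ i, (v i ⬝ᵥ X ω) ^ 2 :=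
      le_trans (sq_nonneg _) (le_ciSup (hbdd v ω) (⟨0, hk⟩ : Fin k))
    rw [Real.norm_eq_abs, abs_of_nonneg hnn]
    exact ciSup_le fun i => hdotsq _ (hv i) _ hω
  -- decomposition of integrals
  have hdecomp : ∀ f : Ω → ℝ, Integrable f → ∫ ω, f ω = ∑ i, ∫ ω in A i, f ω := by
    intro f hf
    have hU : (⋃ i, A i) =ᵐ[volume] (Set.univ : Set Ω) := ae_eq_univ.2 hUnull
    calc ∫ ω, f ω = ∫ ω in ⋃ i, A i, f ω := by
          rw [setIntegral_congr_set hU, setIntegral_univ]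
      _ = ∑ i, ∫ ω in A i, f ω :=
          integral_iUnion_fintype hAmeas hdisj fun i => hf.integrableOn
  constructor
  · calc ∫ ω, ⨆ i, (x i ⬝ᵥ X ω) ^ 2
        = ∑ i, ∫ ω in A i, ⨆ j, (x j ⬝ᵥ X ω) ^ 2 := hdecomp _ (hsupInt x hx)
      _ = ∑ i, ∫ ω in A i, (x i ⬝ᵥ X ω) ^ 2 := by
          refine Finset.sum_congr rfl fun i _ => ?_
          apply setIntegral_congr_fun (hAmeas i)
          intro ω hω
          simp only [hAdef, voronoiCell, Set.mem_setOf_eq] at hω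
          obtain ⟨hS', hle, hlt⟩ := hω
          apply le_antisymm
          · refine ciSup_le fun j => ?_
            have hj : x j ⬝ᵥ X ω ≤ x i ⬝ᵥ X ω := by
              rcases lt_trichotomy i j with h | h | h
              · exact hle j h
              · rw [h]
              · exact (hlt j h).le
            exact pow_le_pow_left₀ (hdot _ (hx j) _ hS').1 hj 2
          · exact le_ciSup (hbdd x ω) i
      _ = ∑ i, x i ⬝ᵥ (Sig i *ᵥ x i) :=
          Finset.sum_congr rfl fun i _ => (hquad i (x i)).symm
      _ ≤ ∑ i, kthEig (Sig i) (hherm i) 0 :=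
          Finset.sum_le_sum fun i _ => rayleigh_le_kthEig (hherm i) (hunit _ (hx i))
  · have hlam : ∀ i, kthEig (Sig i) (hherm i) 0 = ∫ ω in A i, (xhat i ⬝ᵥ X ω) ^ 2 := by
      intro i
      have h2 : xhat i ⬝ᵥ xhat i = 1 := by
        have := hunit _ (hxhatS i)
        simpa [dotProduct, sq] using this
      have h1 : xhat i ⬝ᵥ (Sig i *ᵥ xhat i) = kthEig (Sig i) (hherm i) 0 := by
        rw [hxhat i, dotProduct_smul, smul_eq_mul, h2, mul_one]
      rw [← h1, hquad i (xhat i)]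
    calc ∑ i, kthEig (Sig i) (hherm i) 0
        = ∑ i, ∫ ω in A i, (xhat i ⬝ᵥ X ω) ^ 2 := Finset.sum_congr rfl fun i _ => hlam i
      _ ≤ ∑ i, ∫ ω in A i, ⨆ j, (xhat j ⬝ᵥ X ω) ^ 2 :=
          Finset.sum_le_sum fun i _ => setIntegral_mono_on
            ((hint _ (hxhatS i)).integrableOn)
            ((hsupInt xhat hxhatS).integrableOn) (hAmeas i)
            (fun ω _ => le_ciSup (hbdd xhat ω) i)
      _ = ∫ ω, ⨆ i, (xhat i ⬝ᵥ X ω) ^ 2 := (hdecomp _ (hsupInt xhat hxhatS)).symm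
end

section
/- Suppose X is a random vector in the positive part of the unit sphere of R^d whose law is supported on the union of mutually orthogonal faces F_{I₁},...,F_{I_k} corresponding to a partition (I₁,...,I_k) of {1,...,d}, where F_I = {x ∈ R^d_+ : x_j = 0 ∀ j ∉ I}. Let p_I = P(X ∈ F_I) > 0, and let Σ_{I_u} be the |I_u|×|I_u| cross-moment matrix of X restricted to indices I_u conditional on X ∈ F_{I_u}, so that Σ = E(XXᵀ) is block diagonal with blocks p_{I_u}Σ_{I_u}. If min_{u} p_{I_u} λ₁(Σ_{I_u}) ≥ max_{u} p_{I_u} λ₂(Σ_{I_u}), then for every partition (A₁,...,A_k) of the positive unit sphere into Borel sets, ∑_{u=1}^k p_{I_u} λ₁(Σ_{I_u}) ≥ ∑_{i=1}^k λ₁(E(X Xᵀ 1{X∈A_i})). -/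
open MeasureTheory Matrix

/-- The face `F_I = {y ∈ ℝ^d_+ : y_j = 0 ∀ j ∉ I}` of the nonnegative orthant. -/
def face {d : ℕ} (I : Finset (Fin d)) : Set (Fin d → ℝ) :=
  {y | (∀ t, 0 ≤ y t) ∧ ∀ j ∉ I, y j = 0}

section kthEigLemmas

variable {d : ℕ} {A : Matrix (Fin d) (Fin d) ℝ} (hA : A.IsHermitian)

private lemma sortedList_facts :
    ∃ l : List ℝ, l = (List.ofFn hA.eigenvalues).mergeSort (fun a b => decide (b ≤ a)) ∧
      l.length = d ∧ l.Pairwise (fun a b => b ≤ a) ∧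
      List.Perm l (List.ofFn hA.eigenvalues) := by
  refine ⟨_, rfl, ?_, ?_, List.mergeSort_perm _ _⟩
  · rw [(List.mergeSort_perm _ _).length_eq, List.length_ofFn]
  · have := List.pairwise_mergeSort (le := fun a b : ℝ => decide (b ≤ a))
      (fun a b c h1 h2 => by simp_all; linarith)
      (fun a b => by simpa using le_total b a) (List.ofFn hA.eigenvalues)
    simpa using this

lemma eigenvalues_le_kthEig0 (hd : 0 < d) (j : Fin d) :
    hA.eigenvalues j ≤ kthEig A hA 0 := by
  obtain ⟨l, hl, hlen, hsort, hperm⟩ := sortedList_facts hA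
  have hmem : hA.eigenvalues j ∈ l := hperm.mem_iff.2 (by rw [List.mem_ofFn]; exact ⟨j, rfl⟩)
  rcases l with _ | ⟨a, t⟩
  · simp at hmem
  · rw [kthEig, ← hl]
    simp only [List.getD_cons_zero]
    rcases List.mem_cons.1 hmem with h | h
    · exact le_of_eq h
    · exact (List.pairwise_cons.1 hsort).1 _ h

lemma exists_eq_kthEig0 (hd : 0 < d) : ∃ j, hA.eigenvalues j = kthEig A hA 0 := by
  obtain ⟨l, hl, hlen, hsort, hperm⟩ := sortedList_facts hA
  rcases l with _ | ⟨a, t⟩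
  · simp at hlen; omega
  · have : a ∈ List.ofFn hA.eigenvalues := hperm.mem_iff.1 List.mem_cons_self
    rw [List.mem_ofFn] at this
    obtain ⟨j, hj⟩ := this
    exact ⟨j, by rw [kthEig, ← hl]; simpa using hj⟩

lemma eigenvalues_le_kthEig1 (hd : 2 ≤ d) (j₀ : Fin d)
    (h0 : hA.eigenvalues j₀ = kthEig A hA 0) (j : Fin d) (hj : j ≠ j₀) :
    hA.eigenvalues j ≤ kthEig A hA 1 := by
  obtain ⟨l, hl, hlen, hsort, hperm⟩ := sortedList_facts hA
  rcases l with _ | ⟨a, t⟩; · simp at hlen; omega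
  rcases t with _ | ⟨b, r⟩; · simp at hlen; omega
  have ha : a = hA.eigenvalues j₀ := by
    rw [h0, kthEig, ← hl]; simp
  have hjr : (j₀ : Fin d) ∈ List.finRange d := List.mem_finRange _
  have hperm2 : List.Perm (List.ofFn hA.eigenvalues)
      (hA.eigenvalues j₀ :: ((List.finRange d).erase j₀).map hA.eigenvalues) := by
    rw [List.ofFn_eq_map]
    exact (List.perm_cons_erase hjr).map hA.eigenvalues
  have hcons : List.Perm (a :: b :: r : List ℝ)
      (hA.eigenvalues j₀ :: ((List.finRange d).erase j₀).map hA.eigenvalues) :=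
    hperm.trans hperm2
  rw [ha] at hcons
  have htail : List.Perm (b :: r : List ℝ)
      (((List.finRange d).erase j₀).map hA.eigenvalues) := hcons.cons_inv
  have hjmem : hA.eigenvalues j ∈ (b :: r : List ℝ) := by
    refine htail.mem_iff.2 (List.mem_map.2 ⟨j, ?_, rfl⟩)
    exact (List.mem_erase_of_ne hj).2 (List.mem_finRange _)
  have hb : kthEig A hA 1 = b := by rw [kthEig, ← hl]; simp
  rw [hb]
  rcases List.mem_cons.1 hjmem with h | h
  · exact le_of_eq h
  · exact (List.pairwise_cons.1 (List.pairwise_cons.1 hsort).2).1 _ h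

end kthEigLemmas

section spectralTools

variable {d : ℕ} {A : Matrix (Fin d) (Fin d) ℝ} (hA : A.IsHermitian)

/-- real inner product of the `j`-th eigenvector with `x` -/
noncomputable def einn (hA : A.IsHermitian) (j : Fin d) (x : Fin d → ℝ) : ℝ :=
  ∑ s, hA.eigenvectorBasis j s * x s

lemma einn_eq_inner (j : Fin d) (x : EuclideanSpace ℝ (Fin d)) :
    einn hA j x = inner ℝ (hA.eigenvectorBasis j) x := by
  rw [PiLp.inner_apply]
  simp [einn, RCLike.inner_apply, conj_trivial, mul_comm]

lemma x_eq_sum (x : Fin d → ℝ) (s : Fin d) :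
    x s = ∑ j, einn hA j x * hA.eigenvectorBasis j s := by
  have h := hA.eigenvectorBasis.sum_repr' (WithLp.toLp 2 x : EuclideanSpace ℝ (Fin d))
  have h2 := congrFun (congrArg (fun y : EuclideanSpace ℝ (Fin d) => (y : Fin d → ℝ)) h) s
  simp only [← einn_eq_inner] at h2
  rw [← h2]
  show (∑ j, einn hA j x • hA.eigenvectorBasis j) s = _
  rw [WithLp.ofLp_sum, Finset.sum_apply]
  simp [mul_comm]

lemma quadform_expand (x : Fin d → ℝ) :
    x ⬝ᵥ A *ᵥ x = ∑ j, hA.eigenvalues j * (einn hA j x)^2 := by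
  have hAx : A *ᵥ x = fun s => ∑ j, einn hA j x * (hA.eigenvalues j * hA.eigenvectorBasis j s) := by
    funext s
    have : x = fun t => ∑ j, einn hA j x * hA.eigenvectorBasis j t := by
      funext t; exact x_eq_sum hA x t
    conv_lhs => rw [this]
    simp only [mulVec, dotProduct, Finset.mul_sum]
    rw [Finset.sum_comm]
    congr 1
    funext j
    have := congrFun (hA.mulVec_eigenvectorBasis j) s
    simp only [mulVec, dotProduct, Pi.smul_apply, smul_eq_mul] at this
    calc ∑ t, A s t * (einn hA j x * hA.eigenvectorBasis j t)
        = einn hA j x * ∑ t, A s t * hA.eigenvectorBasis j t := by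
          rw [Finset.mul_sum]; congr 1; funext t; ring
      _ = _ := by
          rw [show ∑ t, A s t * hA.eigenvectorBasis j t
            = hA.eigenvalues j * hA.eigenvectorBasis j s from this]
  rw [hAx]
  simp only [dotProduct, Finset.mul_sum]
  rw [Finset.sum_comm]
  congr 1
  funext j
  have : ∑ s, x s * (einn hA j x * (hA.eigenvalues j * hA.eigenvectorBasis j s))
      = hA.eigenvalues j * einn hA j x * ∑ s, hA.eigenvectorBasis j s * x s := by
    rw [Finset.mul_sum]; congr 1; funext s; ring
  rw [this]
  show _ = hA.eigenvalues j * (einn hA j x)^2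
  rw [show (∑ s, hA.eigenvectorBasis j s * x s) = einn hA j x from rfl]
  ring

lemma parseval_einn (x : EuclideanSpace ℝ (Fin d)) :
    ∑ j, (einn hA j x)^2 = ∑ s, (x s)^2 := by
  have h := hA.eigenvectorBasis.sum_inner_mul_inner x x
  simp only [← einn_eq_inner] at h
  have h2 : (inner ℝ x x : ℝ) = ∑ s, (x s)^2 := by
    rw [PiLp.inner_apply]; simp [RCLike.inner_apply, conj_trivial, pow_two]
  rw [← h2, ← h]
  congr 1; funext j
  rw [show (inner ℝ x (hA.eigenvectorBasis j) : ℝ) = einn hA j x from ?_]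
  · ring
  · rw [real_inner_comm, einn_eq_inner]

lemma eigbasis_unit (j : Fin d) :
    ∑ s, (hA.eigenvectorBasis j s)^2 = 1 := by
  have h := hA.eigenvectorBasis.orthonormal.1 j
  have h2 : (inner ℝ (hA.eigenvectorBasis j) (hA.eigenvectorBasis j) : ℝ)
      = ∑ s, (hA.eigenvectorBasis j s)^2 := by
    rw [PiLp.inner_apply]; simp [RCLike.inner_apply, conj_trivial, pow_two]
  rw [← h2, real_inner_self_eq_norm_sq, h]; norm_num

lemma exists_top_vector (hd : 0 < d) :
    ∃ v : Fin d → ℝ, (∑ s, (v s)^2 = 1) ∧ v ⬝ᵥ A *ᵥ v = kthEig A hA 0 := by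
  obtain ⟨j, hj⟩ := exists_eq_kthEig0 hA hd
  refine ⟨hA.eigenvectorBasis j, eigbasis_unit hA j, ?_⟩
  have hmv := hA.mulVec_eigenvectorBasis j
  have hmv' : A *ᵥ (hA.eigenvectorBasis j : Fin d → ℝ)
      = hA.eigenvalues j • (hA.eigenvectorBasis j : Fin d → ℝ) := by
    funext s
    have := congrFun hmv s
    simpa using this
  rw [hmv', ← hj]
  have : (hA.eigenvectorBasis j : Fin d → ℝ) ⬝ᵥ
      (hA.eigenvalues j • (hA.eigenvectorBasis j : Fin d → ℝ))
      = hA.eigenvalues j * ∑ s, (hA.eigenvectorBasis j s)^2 := by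
    simp [dotProduct, Finset.mul_sum]; congr 1; funext s; ring
  rw [this, eigbasis_unit hA j, mul_one]

lemma quad_le_top (hd : 0 < d) (x : Fin d → ℝ) :
    x ⬝ᵥ A *ᵥ x ≤ kthEig A hA 0 * ∑ s, (x s)^2 := by
  rw [quadform_expand hA, ← show ∑ j, (einn hA j x)^2 = ∑ s, (x s)^2 from parseval_einn hA (WithLp.toLp 2 x), Finset.mul_sum]
  exact Finset.sum_le_sum fun j _ =>
    mul_le_mul_of_nonneg_right (eigenvalues_le_kthEig0 hA hd j) (sq_nonneg _)

lemma block_bound (hd : 2 ≤ d)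
    (Iu : Finset (Fin d)) (hsupp : ∀ s, s ∉ Iu → ∀ t, A s t = 0)
    (t : ℝ) (ht0 : 0 ≤ t) (ht2 : kthEig A hA 1 ≤ t) (hpos : 0 < kthEig A hA 0) :
    ∃ e : Fin d → ℝ, (∑ s, (e s)^2 = 1) ∧ ∀ x : Fin d → ℝ,
      x ⬝ᵥ A *ᵥ x ≤ (kthEig A hA 0 - t) * (∑ s, e s * x s)^2 + t * ∑ s ∈ Iu, (x s)^2 := by
  obtain ⟨j₀, hj₀⟩ := exists_eq_kthEig0 hA (by omega)
  set e : Fin d → ℝ := ⇑(hA.eigenvectorBasis j₀) with he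
  have hesupp : ∀ j : Fin d, hA.eigenvalues j ≠ 0 → ∀ s ∉ Iu, hA.eigenvectorBasis j s = 0 := by
    intro j hμ s hs
    have h : (A *ᵥ (hA.eigenvectorBasis j : Fin d → ℝ)) s
        = hA.eigenvalues j * hA.eigenvectorBasis j s :=
      congrFun (hA.mulVec_eigenvectorBasis j) s
    have h2 : (A *ᵥ (hA.eigenvectorBasis j : Fin d → ℝ)) s = 0 := by
      simp only [mulVec, dotProduct]
      exact Finset.sum_eq_zero fun u _ => by rw [hsupp s hs u, zero_mul]
    rw [h2] at h
    rcases mul_eq_zero.1 h.symm with h' | h'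
    · exact absurd h' hμ
    · exact h'
  refine ⟨e, eigbasis_unit hA j₀, fun x => ?_⟩
  set xu : Fin d → ℝ := fun s => if s ∈ Iu then x s else 0 with hxu
  have hxu_sq : ∑ s, (xu s)^2 = ∑ s ∈ Iu, (x s)^2 := by
    rw [← Finset.sum_subset (Finset.subset_univ Iu)]
    · exact Finset.sum_congr rfl fun s hs => by simp [hxu, hs]
    · intro s _ hs; simp [hxu, hs]
  have heinn : ∀ j : Fin d, hA.eigenvalues j ≠ 0 → einn hA j x = einn hA j xu := by
    intro j hμ
    rw [einn, einn]
    apply Finset.sum_congr rfl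
    intro s _
    by_cases hs : s ∈ Iu
    · simp [hxu, hs]
    · rw [hesupp j hμ s hs]; ring
  have hμ0 : hA.eigenvalues j₀ ≠ 0 := by rw [hj₀]; exact ne_of_gt hpos
  have hkey : ∀ j : Fin d, j ≠ j₀ →
      hA.eigenvalues j * (einn hA j x)^2 ≤ t * (einn hA j xu)^2 := by
    intro j hj
    by_cases hμ : hA.eigenvalues j = 0
    · rw [hμ, zero_mul]; positivity
    · rw [heinn j hμ]
      apply mul_le_mul_of_nonneg_right _ (sq_nonneg _)
      exact le_trans (eigenvalues_le_kthEig1 hA hd j₀ hj₀ j hj) ht2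
  have hpar : ∑ j ∈ Finset.univ.erase j₀, (einn hA j xu)^2
      = ∑ s ∈ Iu, (x s)^2 - (einn hA j₀ xu)^2 := by
    have : ∑ j, (einn hA j xu)^2 = ∑ s, (xu s)^2 := parseval_einn hA (WithLp.toLp 2 xu)
    rw [← Finset.add_sum_erase _ _ (Finset.mem_univ j₀)] at this
    rw [← hxu_sq]; linarith [this]
  have heinn0 : einn hA j₀ xu = einn hA j₀ x := (heinn j₀ hμ0).symm
  have hEq : (∑ s, e s * x s) = einn hA j₀ x := by rw [einn]
  rw [quadform_expand hA x, ← Finset.add_sum_erase _ _ (Finset.mem_univ j₀), hj₀]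
  calc kthEig A hA 0 * (einn hA j₀ x)^2
        + ∑ j ∈ Finset.univ.erase j₀, hA.eigenvalues j * (einn hA j x)^2
      ≤ kthEig A hA 0 * (einn hA j₀ x)^2 + ∑ j ∈ Finset.univ.erase j₀, t * (einn hA j xu)^2 := by
        apply add_le_add_right
        exact Finset.sum_le_sum fun j hj => hkey j (Finset.ne_of_mem_erase hj)
    _ = kthEig A hA 0 * (einn hA j₀ x)^2 + t * (∑ s ∈ Iu, (x s)^2 - (einn hA j₀ x)^2) := by
        rw [← Finset.mul_sum, hpar, heinn0]
    _ ≤ (kthEig A hA 0 - t) * (∑ s, e s * x s)^2 + t * ∑ s ∈ Iu, (x s)^2 := by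
        rw [hEq]; ring_nf; linarith

lemma psd_quad_le_sum (hpsd : A.PosSemidef) {m : ℕ}
    (w : Fin m → EuclideanSpace ℝ (Fin d)) (hw : Orthonormal ℝ w)
    (v : EuclideanSpace ℝ (Fin d)) (hv : ∑ s, (v s)^2 = 1)
    (hvmem : v ∈ Submodule.span ℝ (Set.range w)) :
    (v : Fin d → ℝ) ⬝ᵥ A *ᵥ v ≤ ∑ i, (w i : Fin d → ℝ) ⬝ᵥ A *ᵥ w i := by
  have hA : A.IsHermitian := hpsd.1
  obtain ⟨c, hc⟩ := (Submodule.mem_span_range_iff_exists_fun ℝ).1 hvmem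
  have hcs : ∑ i, (c i)^2 = 1 := by
    have h1 : (inner ℝ v v : ℝ) = ∑ s, (v s)^2 := by
      rw [PiLp.inner_apply]; simp [RCLike.inner_apply, conj_trivial, pow_two]
    have h2 := hw.inner_sum c c Finset.univ
    rw [hc] at h2
    simp only [conj_trivial] at h2
    have : ∑ i, (c i)^2 = ∑ i, c i * c i :=
      Finset.sum_congr rfl fun i _ => pow_two (c i)
    rw [this, ← h2, h1, hv]
  have heinnv : ∀ j, einn hA j v = ∑ i, c i * einn hA j (w i) := by
    intro j
    rw [einn_eq_inner, ← hc, inner_sum]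
    exact Finset.sum_congr rfl fun i _ => by
      rw [real_inner_smul_right, einn_eq_inner]
  have hRHS : ∑ i, (w i : Fin d → ℝ) ⬝ᵥ A *ᵥ w i
      = ∑ j, hA.eigenvalues j * ∑ i, (einn hA j (w i))^2 := by
    rw [Finset.sum_congr rfl fun i _ => quadform_expand hA (w i), Finset.sum_comm]
    exact Finset.sum_congr rfl fun j _ => by rw [Finset.mul_sum]
  rw [quadform_expand hA, hRHS]
  apply Finset.sum_le_sum
  intro j _
  apply mul_le_mul_of_nonneg_left _ (hpsd.eigenvalues_nonneg j)
  rw [heinnv j]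
  calc (∑ i, c i * einn hA j (w i))^2
      ≤ (∑ i, (c i)^2) * ∑ i, (einn hA j (w i))^2 :=
        Finset.sum_mul_sq_le_sq_mul_sq _ _ _
    _ = ∑ i, (einn hA j (w i))^2 := by rw [hcs, one_mul]

end spectralTools

section assembly

variable {d : ℕ}

lemma mulVec_sum_mats {k : ℕ} (N : Fin k → Matrix (Fin d) (Fin d) ℝ) (x : Fin d → ℝ) :
    (∑ i, N i) *ᵥ x = ∑ i, (N i) *ᵥ x := by
  funext s
  simp only [mulVec, dotProduct, Matrix.sum_apply, Finset.sum_mul, Finset.sum_apply]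
  exact Finset.sum_comm

lemma dot_sum_matrices {k : ℕ} (N : Fin k → Matrix (Fin d) (Fin d) ℝ) (x : Fin d → ℝ) :
    x ⬝ᵥ (∑ i, N i) *ᵥ x = ∑ i, x ⬝ᵥ (N i) *ᵥ x := by
  rw [mulVec_sum_mats]
  simp only [dotProduct, Finset.sum_apply, Finset.mul_sum]
  exact Finset.sum_comm

lemma key_ineq {d k : ℕ} (hd : 2 ≤ d) (hk : 2 ≤ k)
    (M D : Fin k → Matrix (Fin d) (Fin d) ℝ)
    (hM : ∀ i, (M i).PosSemidef)
    (hMh : ∀ i, (M i).IsHermitian)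
    (hDh : ∀ u, (D u).IsHermitian)
    (hsum : ∑ i, M i = ∑ u, D u)
    (I : Fin k → Finset (Fin d))
    (hIdisj : ∀ u v, u ≠ v → Disjoint (I u) (I v))
    (hDsupp : ∀ u s, s ∉ I u → ∀ t, D u s t = 0)
    (hbal : ∀ u v, kthEig (D v) (hDh v) 1 ≤ kthEig (D u) (hDh u) 0)
    (hDpos : ∀ u, 0 < kthEig (D u) (hDh u) 0) :
    ∑ i, kthEig (M i) (hMh i) 0 ≤ ∑ u, kthEig (D u) (hDh u) 0 := by
  haveI : NeZero k := ⟨by omega⟩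
  have huniv : (Finset.univ : Finset (Fin k)).Nonempty := Finset.univ_nonempty
  set t : ℝ := Finset.univ.inf' huniv (fun u => kthEig (D u) (hDh u) 0) with htdef
  obtain ⟨u₀, _, hu₀⟩ := Finset.exists_mem_eq_inf' huniv (fun u => kthEig (D u) (hDh u) 0)
  have htle : ∀ u, t ≤ kthEig (D u) (hDh u) 0 := fun u =>
    Finset.inf'_le _ (Finset.mem_univ u)
  have ht0 : 0 ≤ t := by rw [htdef, hu₀]; exact le_of_lt (hDpos u₀)
  have ht2 : ∀ u, kthEig (D u) (hDh u) 1 ≤ t := fun u => by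
    rw [htdef, hu₀]; exact hbal u₀ u
  choose v hv1 hv2 using fun i => exists_top_vector (hMh i) (by omega : 0 < d)
  set Vfun : Fin k → EuclideanSpace ℝ (Fin d) := fun i => (WithLp.toLp 2 (v i) : EuclideanSpace ℝ (Fin d))
    with hVfun
  set W : Submodule ℝ (EuclideanSpace ℝ (Fin d)) := Submodule.span ℝ (Set.range Vfun)
    with hW
  set r : ℕ := Module.finrank ℝ W with hrdef
  have hr : r ≤ k := by
    classical
    refine (finrank_span_le_card (R := ℝ) (Set.range Vfun)).trans ?_
    rw [Set.toFinset_card]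
    simpa using Fintype.card_range_le Vfun
  set b := stdOrthonormalBasis ℝ W with hb
  set w : Fin r → EuclideanSpace ℝ (Fin d) := fun m => (b m : EuclideanSpace ℝ (Fin d)) with hwdef
  have hw : Orthonormal ℝ w := b.orthonormal.comp_linearIsometry W.subtypeₗᵢ
  have hspan : Submodule.span ℝ (Set.range w) = W := by
    have h1 : Set.range w = W.subtype '' Set.range b := by
      rw [← Set.range_comp]; rfl
    rw [h1, Submodule.span_image]
    have h2 : Submodule.span ℝ (Set.range (b : Fin r → W)) = ⊤ := by
      have := b.toBasis.span_eq
      rwa [b.coe_toBasis] at this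
    rw [h2, Submodule.map_subtype_top]
  have hmem : ∀ i, (Vfun i : EuclideanSpace ℝ (Fin d)) ∈ Submodule.span ℝ (Set.range w) := by
    intro i
    rw [hspan, hW]
    exact Submodule.subset_span (Set.mem_range_self i)
  have step1 : ∀ i, kthEig (M i) (hMh i) 0 ≤ ∑ m, (w m : Fin d → ℝ) ⬝ᵥ (M i) *ᵥ (w m) := by
    intro i
    rw [← hv2 i]
    exact psd_quad_le_sum (hM i) w hw (Vfun i) (hv1 i) (hmem i)
  have step2 : ∀ u, ∃ e : Fin d → ℝ, (∑ s, (e s)^2 = 1) ∧ ∀ x : Fin d → ℝ,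
      x ⬝ᵥ (D u) *ᵥ x ≤ (kthEig (D u) (hDh u) 0 - t) * (∑ s, e s * x s)^2
        + t * ∑ s ∈ I u, (x s)^2 := fun u =>
    block_bound (hDh u) hd (I u) (hDsupp u) t ht0 (ht2 u) (hDpos u)
  choose e he1 he2 using step2
  set eE : Fin k → EuclideanSpace ℝ (Fin d) := fun u => WithLp.toLp 2 (e u) with heE
  have hbessel : ∀ u, ∑ m, (∑ s, e u s * w m s)^2 ≤ 1 := by
    intro u
    have h := hw.sum_inner_products_le (𝕜 := ℝ) (eE u) (s := Finset.univ)
    have hnorm : ‖eE u‖^2 = 1 := by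
      rw [← real_inner_self_eq_norm_sq]
      rw [PiLp.inner_apply]
      simpa [RCLike.inner_apply, conj_trivial, pow_two] using he1 u
    calc ∑ m, (∑ s, e u s * w m s)^2
        = ∑ m, ‖(inner ℝ (w m) (eE u) : ℝ)‖^2 := by
          refine Finset.sum_congr rfl fun m _ => ?_
          rw [Real.norm_eq_abs, sq_abs, PiLp.inner_apply]
          simp only [RCLike.inner_apply, conj_trivial]
          exact congrArg (· ^ 2) (Finset.sum_congr rfl fun s _ => rfl)
      _ ≤ ‖eE u‖^2 := h
      _ = 1 := hnorm
  have hmass : ∀ m, ∑ u, ∑ s ∈ I u, (w m s)^2 ≤ 1 := by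
    intro m
    have hnorm : ∑ s, (w m s)^2 = 1 := by
      have h := hw.1 m
      have h2 : (inner ℝ (w m) (w m) : ℝ) = ∑ s, (w m s)^2 := by
        rw [PiLp.inner_apply]; simp [RCLike.inner_apply, conj_trivial, pow_two]
      rw [← h2, real_inner_self_eq_norm_sq, h]; norm_num
    classical
    rw [← Finset.sum_biUnion (fun a _ b _ hab => hIdisj a b hab)]
    rw [← hnorm]
    apply Finset.sum_le_sum_of_subset_of_nonneg (Finset.subset_univ _)
    intro s _ _
    positivity
  calc ∑ i, kthEig (M i) (hMh i) 0
      ≤ ∑ i, ∑ m, (w m : Fin d → ℝ) ⬝ᵥ (M i) *ᵥ (w m) := Finset.sum_le_sum fun i _ => step1 i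
    _ = ∑ m, (w m : Fin d → ℝ) ⬝ᵥ (∑ i, M i) *ᵥ (w m) := by
        rw [Finset.sum_comm]
        exact Finset.sum_congr rfl fun m _ => (dot_sum_matrices M (w m)).symm
    _ = ∑ m, ∑ u, (w m : Fin d → ℝ) ⬝ᵥ (D u) *ᵥ (w m) := by
        rw [hsum]
        exact Finset.sum_congr rfl fun m _ => dot_sum_matrices D (w m)
    _ = ∑ u, ∑ m, (w m : Fin d → ℝ) ⬝ᵥ (D u) *ᵥ (w m) := Finset.sum_comm
    _ ≤ ∑ u, ((kthEig (D u) (hDh u) 0 - t) * 1 + t * ∑ m, ∑ s ∈ I u, (w m s)^2) := by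
        apply Finset.sum_le_sum
        intro u _
        calc ∑ m, (w m : Fin d → ℝ) ⬝ᵥ (D u) *ᵥ (w m)
            ≤ ∑ m, ((kthEig (D u) (hDh u) 0 - t) * (∑ s, e u s * w m s)^2
                + t * ∑ s ∈ I u, (w m s)^2) :=
              Finset.sum_le_sum fun m _ => he2 u (w m)
          _ = (kthEig (D u) (hDh u) 0 - t) * (∑ m, (∑ s, e u s * w m s)^2)
                + t * ∑ m, ∑ s ∈ I u, (w m s)^2 := by
              rw [Finset.sum_add_distrib, ← Finset.mul_sum, ← Finset.mul_sum]
          _ ≤ (kthEig (D u) (hDh u) 0 - t) * 1 + t * ∑ m, ∑ s ∈ I u, (w m s)^2 := by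
              apply add_le_add_left
              apply mul_le_mul_of_nonneg_left (hbessel u)
              linarith [htle u]
    _ ≤ ∑ u, kthEig (D u) (hDh u) 0 := by
        have hswap : ∑ u, t * ∑ m, ∑ s ∈ I u, (w m s)^2 ≤ t * r := by
          rw [← Finset.mul_sum]
          apply mul_le_mul_of_nonneg_left _ ht0
          rw [Finset.sum_comm]
          calc ∑ m, ∑ u, ∑ s ∈ I u, (w m s)^2 ≤ ∑ m : Fin r, (1:ℝ) :=
                Finset.sum_le_sum fun m _ => hmass m
            _ = r := by simp
        have : ∑ u, ((kthEig (D u) (hDh u) 0 - t) * 1 + t * ∑ m, ∑ s ∈ I u, (w m s)^2)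
            = ∑ u, (kthEig (D u) (hDh u) 0 - t) + ∑ u, t * ∑ m, ∑ s ∈ I u, (w m s)^2 := by
          rw [Finset.sum_add_distrib]
          simp
        rw [this, Finset.sum_sub_distrib]
        have hrk : t * (r:ℝ) ≤ t * k := by
          apply mul_le_mul_of_nonneg_left _ ht0
          exact_mod_cast hr
        have hcard : ∑ _u : Fin k, t = k * t := by
          rw [Finset.sum_const]; simp [mul_comm]
        linarith [hswap, hrk, hcard ▸ le_refl (∑ _u : Fin k, t)]

end assembly
section mainProof

theorem stmt_15 {d k : ℕ} (hd : 2 ≤ d) (hk : 2 ≤ k) (hkd : k ≤ d)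
    {Ω : Type*} [MeasureSpace Ω] [IsProbabilityMeasure (volume : Measure Ω)]
    (S : Set (Fin d → ℝ)) (hSdef : S = {y | (∀ t, 0 ≤ y t) ∧ ∑ t, y t ^ 2 = 1})
    (X : Ω → Fin d → ℝ) (hXmeas : Measurable X)
    (I : Fin k → Finset (Fin d))
    (hIdisj : ∀ u v, u ≠ v → Disjoint (I u) (I v))
    (hIcover : ∀ j, ∃ u, j ∈ I u)
    (hIne : ∀ u, (I u).Nonempty)
    (hsupp : ∀ᵐ ω, X ω ∈ S ∧ ∃ u, X ω ∈ face (I u))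
    (hp : ∀ u, volume {ω | X ω ∈ face (I u)} ≠ 0)
    (D : Fin k → Matrix (Fin d) (Fin d) ℝ)
    (hDdef : ∀ u, D u =
      Matrix.of fun s t => ∫ ω in {ω | X ω ∈ face (I u)}, X ω s * X ω t)
    (hDh : ∀ u, (D u).IsHermitian)
    (hbal : ∀ u v, kthEig (D v) (hDh v) 1 ≤ kthEig (D u) (hDh u) 0) :
    ∀ A : Fin k → Set (Fin d → ℝ), (∀ i, MeasurableSet (A i)) →
      Pairwise (Function.onFun Disjoint A) → S ⊆ ⋃ i, A i →
      ∀ hSA : ∀ i, (Matrix.of fun s t =>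
          ∫ ω in {ω | X ω ∈ A i}, X ω s * X ω t : Matrix (Fin d) (Fin d) ℝ).IsHermitian,
        ∑ i, kthEig (Matrix.of fun s t => ∫ ω in {ω | X ω ∈ A i}, X ω s * X ω t)
            (hSA i) 0 ≤
          ∑ u, kthEig (D u) (hDh u) 0 := by
  intro A hAmeas hApair hAcover hSA
  classical
  set Bset : Fin k → Set Ω := fun i => {ω | X ω ∈ A i} with hBset
  set Cset : Fin k → Set Ω := fun u => {ω | X ω ∈ face (I u)} with hCset
  have hBmeas : ∀ i, MeasurableSet (Bset i) := fun i => hXmeas (hAmeas i)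
  have hfacemeas : ∀ (J : Finset (Fin d)), MeasurableSet (face J) := by
    intro J
    have heq : face J = (⋂ t, (fun y : Fin d → ℝ => y t) ⁻¹' Set.Ici 0) ∩
        ⋂ j, ⋂ (_ : j ∉ J), (fun y : Fin d → ℝ => y j) ⁻¹' {0} := by
      ext y
      simp only [face, Set.mem_setOf_eq, Set.mem_inter_iff, Set.mem_iInter, Set.mem_preimage,
        Set.mem_Ici, Set.mem_singleton_iff]
    rw [heq]
    exact (MeasurableSet.iInter fun t => (measurable_pi_apply t) measurableSet_Ici).inter
      (MeasurableSet.iInter fun j => MeasurableSet.iInter fun _ =>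
        (measurable_pi_apply j) (measurableSet_singleton 0))
  have hCmeas : ∀ u, MeasurableSet (Cset u) := fun u => hXmeas (hfacemeas (I u))
  have hfmeas : ∀ s t : Fin d, Measurable fun ω => X ω s * X ω t := fun s t =>
    ((measurable_pi_apply s).comp hXmeas).mul ((measurable_pi_apply t).comp hXmeas)
  have hXbd : ∀ᵐ ω, ∀ s : Fin d, |X ω s| ≤ 1 := by
    filter_upwards [hsupp] with ω hω
    intro s
    have hωS : X ω ∈ S := hω.1
    rw [hSdef] at hωS
    obtain ⟨hpos, hsum1⟩ := hωS
    have h1 : (X ω s)^2 ≤ 1 := by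
      rw [← hsum1]
      exact Finset.single_le_sum (f := fun r => (X ω r)^2)
        (fun r _ => sq_nonneg _) (Finset.mem_univ s)
    exact (sq_le_one_iff_abs_le_one _).1 h1
  have hfint : ∀ s t : Fin d, Integrable (fun ω => X ω s * X ω t) := by
    intro s t
    refine Integrable.mono' (integrable_const 1) (hfmeas s t).aestronglyMeasurable ?_
    filter_upwards [hXbd] with ω hω
    rw [Real.norm_eq_abs, abs_mul]
    exact mul_le_one₀ (hω s) (abs_nonneg _) (hω t)
  -- splitting over an a.e.-partition
  have hsplit : ∀ (B : Fin k → Set Ω), (∀ u, MeasurableSet (B u)) →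
      (∀ᵐ ω, ∃ u, ω ∈ B u ∧ ∀ v, ω ∈ B v → v = u) →
      ∀ g : Ω → ℝ, Integrable g → ∑ u, ∫ ω in B u, g ω = ∫ ω, g ω := by
    intro B hB hae g hg
    have h1 : ∀ u : Fin k, ∫ ω in B u, g ω = ∫ ω, (B u).indicator g ω := fun u =>
      (integral_indicator (hB u)).symm
    rw [Finset.sum_congr rfl fun u _ => h1 u,
      ← integral_finset_sum _ (fun u _ => hg.indicator (hB u))]
    apply integral_congr_ae
    filter_upwards [hae] with ω hω
    obtain ⟨u, hu, huniq⟩ := hω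
    rw [Finset.sum_eq_single u]
    · exact Set.indicator_of_mem hu g
    · intro v _ hv
      exact Set.indicator_of_notMem (fun hm => hv (huniq v hm)) g
    · intro h; exact absurd (Finset.mem_univ u) h
  have haeA : ∀ᵐ ω, ∃ u, ω ∈ Bset u ∧ ∀ v, ω ∈ Bset v → v = u := by
    filter_upwards [hsupp] with ω hω
    obtain ⟨hS, _⟩ := hω
    obtain ⟨i, hi⟩ := Set.mem_iUnion.1 (hAcover hS)
    refine ⟨i, hi, fun v hv => ?_⟩
    by_contra hne
    exact (Set.disjoint_left.1 (hApair hne)) hv hi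
  have haeC : ∀ᵐ ω, ∃ u, ω ∈ Cset u ∧ ∀ v, ω ∈ Cset v → v = u := by
    filter_upwards [hsupp] with ω hω
    obtain ⟨hS, u, hu⟩ := hω
    refine ⟨u, hu, fun v hv => ?_⟩
    by_contra hne
    have hzero : ∀ j, X ω j = 0 := by
      intro j
      by_cases hj : j ∈ I v
      · exact hu.2 j (Finset.disjoint_left.1 (hIdisj v u hne) hj)
      · exact hv.2 j hj
    rw [hSdef] at hS
    obtain ⟨_, hsum1⟩ := hS
    have h0 : ∑ r, X ω r ^ 2 = 0 := Finset.sum_eq_zero fun r _ => by rw [hzero r]; norm_num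
    rw [h0] at hsum1
    exact absurd hsum1 (by norm_num)
  set M : Fin k → Matrix (Fin d) (Fin d) ℝ := fun i =>
    Matrix.of fun s t => ∫ ω in Bset i, X ω s * X ω t with hMdef
  have hsumMD : ∑ i, M i = ∑ u, D u := by
    ext s t
    have hMent : (∑ i, M i) s t = ∫ ω, X ω s * X ω t := by
      rw [Matrix.sum_apply]
      exact hsplit Bset hBmeas haeA _ (hfint s t)
    have hDent : (∑ u, D u) s t = ∫ ω, X ω s * X ω t := by
      rw [Matrix.sum_apply]
      have h0 : ∀ u, (D u) s t = ∫ ω in Cset u, X ω s * X ω t := fun u => by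
        rw [hDdef u]; rfl
      rw [Finset.sum_congr rfl fun u _ => h0 u]
      exact hsplit Cset hCmeas haeC _ (hfint s t)
    rw [hMent, hDent]
  -- general quadratic-form computation
  have hquad_gen : ∀ (B : Set Ω), MeasurableSet B → ∀ x : Fin d → ℝ,
      x ⬝ᵥ ((Matrix.of fun s t => ∫ ω in B, X ω s * X ω t :
        Matrix (Fin d) (Fin d) ℝ)) *ᵥ x = ∫ ω in B, (∑ s, x s * X ω s)^2 := by
    intro B hB x
    have hint2 : ∀ s t : Fin d, Integrable (fun ω => x s * X ω s * (x t * X ω t))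
        (volume.restrict B) := by
      intro s t
      have h1 := ((hfint s t).restrict (s := B)).const_mul (x s * x t)
      have heq : (fun ω => x s * X ω s * (x t * X ω t))
          = fun ω => (x s * x t) * (X ω s * X ω t) := by funext ω; ring
      rw [heq]; exact h1
    calc x ⬝ᵥ ((Matrix.of fun s t => ∫ ω in B, X ω s * X ω t :
        Matrix (Fin d) (Fin d) ℝ)) *ᵥ x
        = ∑ s, ∑ t, (x s * x t) * ∫ ω in B, X ω s * X ω t := by
          simp only [mulVec, dotProduct, Finset.mul_sum, Matrix.of_apply]
          exact Finset.sum_congr rfl fun s _ => Finset.sum_congr rfl fun t _ => by ring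
      _ = ∑ s, ∑ t, ∫ ω in B, x s * X ω s * (x t * X ω t) := by
          refine Finset.sum_congr rfl fun s _ => Finset.sum_congr rfl fun t _ => ?_
          rw [← integral_const_mul]
          exact integral_congr_ae (Filter.Eventually.of_forall fun ω => by ring)
      _ = ∑ s, ∫ ω in B, ∑ t, x s * X ω s * (x t * X ω t) :=
          Finset.sum_congr rfl fun s _ =>
            (integral_finset_sum _ (fun t _ => hint2 s t)).symm
      _ = ∫ ω in B, ∑ s, ∑ t, x s * X ω s * (x t * X ω t) :=
          (integral_finset_sum _ (fun s _ =>
            integrable_finset_sum _ (fun t _ => hint2 s t))).symm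
      _ = ∫ ω in B, (∑ s, x s * X ω s)^2 := by
          refine integral_congr_ae (Filter.Eventually.of_forall fun ω => ?_)
          show ∑ s, ∑ t, x s * X ω s * (x t * X ω t) = (∑ s, x s * X ω s)^2
          rw [pow_two, Finset.sum_mul_sum]
  have hMpsd : ∀ i, (M i).PosSemidef := by
    intro i
    refine .of_dotProduct_mulVec_nonneg (hSA i) fun x => ?_
    have hstar : (star x : Fin d → ℝ) = x := funext fun s => star_trivial _
    rw [hstar, hquad_gen (Bset i) (hBmeas i) x]
    exact integral_nonneg fun ω => sq_nonneg _
  -- D u is supported on the I u block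
  have hDsupp : ∀ u s, s ∉ I u → ∀ r, D u s r = 0 := by
    intro u s hs r
    rw [hDdef u]
    show ∫ ω in Cset u, X ω s * X ω r = 0
    rw [setIntegral_congr_fun (hCmeas u) (g := fun _ => (0:ℝ))
      (fun ω hω => by rw [hω.2 s hs, zero_mul]), integral_const]
    simp
  -- positivity of the top eigenvalue of D u
  have htrace : ∀ u, 0 < ∑ s, (D u) s s := by
    intro u
    have h0 : ∀ s : Fin d, (D u) s s = ∫ ω in Cset u, X ω s * X ω s := fun s => by
      rw [hDdef u]; rfl
    rw [Finset.sum_congr rfl fun s _ => h0 s,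
      ← integral_finset_sum _ (fun s _ => (hfint s s).restrict)]
    have h2 : ∫ ω in Cset u, ∑ s, X ω s * X ω s = ∫ ω in Cset u, (1:ℝ) := by
      apply integral_congr_ae
      filter_upwards [ae_restrict_of_ae hsupp] with ω hω
      have hS := hω.1
      rw [hSdef] at hS
      obtain ⟨_, hsum1⟩ := hS
      have hh : ∑ s, X ω s * X ω s = ∑ s, X ω s ^ 2 :=
        Finset.sum_congr rfl fun s _ => (pow_two (X ω s)).symm
      rw [hh]
      exact hsum1
    rw [h2, setIntegral_const, smul_eq_mul, mul_one]
    exact ENNReal.toReal_pos (hp u) (measure_ne_top _ _)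
  have hDpos : ∀ u, 0 < kthEig (D u) (hDh u) 0 := by
    intro u
    obtain ⟨s, hs⟩ : ∃ s, 0 < (D u) s s := by
      by_contra h
      push_neg at h
      have : ∑ s, (D u) s s ≤ 0 := Finset.sum_nonpos fun s _ => h s
      linarith [htrace u]
    have hq : (Pi.single s 1 : Fin d → ℝ) ⬝ᵥ (D u) *ᵥ Pi.single s 1 = (D u) s s := by
      simp [dotProduct, mulVec, Pi.single_apply]
    have hb := quad_le_top (hDh u) (by omega : 0 < d) (Pi.single s 1)
    rw [hq] at hb
    have hsum1 : ∑ r, ((Pi.single s 1 : Fin d → ℝ) r)^2 = 1 := by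
      simp [Pi.single_apply]
    rw [hsum1, mul_one] at hb
    linarith
  exact key_ineq hd hk M D hMpsd hSA hDh hsumMD I hIdisj hDsupp hbal hDpos

end mainProof
end

section
/- Let X take each value e₁,...,e_d with probability 1/d. For any partition of {1,...,d} into two sets of sizes ℓ and d−ℓ, the corresponding value ∑ ‖E(X 1{X∈A_i})‖₂ in the 2-means dual objective equals (√ℓ + √(d−ℓ))/d when A₁ and A₂ collect the basis vectors in each set. Thus the 2-means clustering of X assigns the basis vectors to the partition sets of sizes ℓ and d−ℓ optimally only if √ℓ + √(d−ℓ) is maximal over ℓ ∈ {0,...,d}, i.e., only for the most balanced split. -/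
open MeasureTheory

lemma single_inj {d : ℕ} {i j : Fin d} (h : (Pi.single i 1 : Fin d → ℝ) = Pi.single j 1) : i = j := by
  by_contra hne
  have := congrFun h i
  simp [Pi.single_apply, hne] at this

lemma key {d : ℕ} (hd : 0 < d) {Ω : Type*} [MeasureSpace Ω]
    [IsProbabilityMeasure (volume : Measure Ω)]
    (X : Ω → Fin d → ℝ) (hXmeas : Measurable X)
    (hXunif : ∀ i : Fin d, volume {ω | X ω = Pi.single i 1} = (d : ENNReal)⁻¹)
    (S : Finset (Fin d)) :
    vnorm (fun t => ∫ ω in {ω | X ω ∈ {y | ∃ i ∈ S, y = Pi.single i 1}}, X ω t)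
      = Real.sqrt S.card / d := by
  have hms : ∀ i : Fin d, MeasurableSet {ω | X ω = Pi.single i 1} := by
    intro i
    exact hXmeas (measurableSet_singleton _)
  have hint : ∀ t : Fin d, (∫ ω in {ω | X ω ∈ {y | ∃ i ∈ S, y = Pi.single i 1}}, X ω t)
      = ∑ i ∈ S, (d : ℝ)⁻¹ * (Pi.single i 1 : Fin d → ℝ) t := by
    intro t
    have hU : {ω | X ω ∈ {y | ∃ i ∈ S, y = Pi.single i 1}}
        = ⋃ i ∈ S, {ω | X ω = Pi.single i 1} := by
      ext ω; simp
    rw [hU, integral_biUnion_finset S (fun i _ => hms i)]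
    · refine Finset.sum_congr rfl fun i _ => ?_
      have h1 : ∫ ω in {ω | X ω = Pi.single i 1}, X ω t
          = ∫ _ω in {ω | X ω = Pi.single i 1}, (Pi.single i 1 : Fin d → ℝ) t := by
        refine setIntegral_congr_fun (hms i) fun ω hω => ?_
        simp only [Set.mem_setOf_eq] at hω
        rw [hω]
      rw [h1, setIntegral_const, measureReal_def, hXunif i, smul_eq_mul]
      congr 1
      simp [ENNReal.toReal_inv]
    · intro i _ j _ hij
      refine Set.disjoint_left.mpr fun ω h1 h2 => ?_
      exact hij (single_inj (h1.symm.trans h2))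
    · intro i _
      have hc : IntegrableOn (fun _ : Ω => (Pi.single i 1 : Fin d → ℝ) t)
          {ω | X ω = Pi.single i 1} volume :=
        (integrableOn_const_iff).mpr (Or.inr (lt_of_le_of_lt prob_le_one ENNReal.one_lt_top))
      refine hc.congr_fun (fun ω hω => ?_) (hms i)
      simp only [Set.mem_setOf_eq] at hω
      rw [hω]
  unfold vnorm
  have : ∀ t : Fin d, (∑ i ∈ S, (d : ℝ)⁻¹ * (Pi.single i 1 : Fin d → ℝ) t)
      = if t ∈ S then (d : ℝ)⁻¹ else 0 := by
    intro t
    simp only [Pi.single_apply, mul_ite, mul_one, mul_zero]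
    exact Finset.sum_ite_eq S t fun _ => (d : ℝ)⁻¹
  simp only [hint, this]
  have hsum : (∑ t : Fin d, (if t ∈ S then (d : ℝ)⁻¹ else 0) ^ 2)
      = S.card * ((d : ℝ)⁻¹) ^ 2 := by
    rw [← Finset.sum_subset (Finset.subset_univ S) (fun t _ ht => by simp [ht])]
    have h2 : ∑ t ∈ S, (if t ∈ S then (d:ℝ)⁻¹ else 0)^2 = ∑ _t ∈ S, ((d:ℝ)⁻¹)^2 :=
      Finset.sum_congr rfl (fun t ht => by rw [if_pos ht])
    rw [h2, Finset.sum_const, nsmul_eq_mul]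
  rw [hsum, Real.sqrt_mul (Nat.cast_nonneg _),
    Real.sqrt_sq (by positivity : (0:ℝ) ≤ (d : ℝ)⁻¹), div_eq_mul_inv]

lemma key' {d : ℕ} (hd : 0 < d) {Ω : Type*} [MeasureSpace Ω]
    [IsProbabilityMeasure (volume : Measure Ω)]
    (X : Ω → Fin d → ℝ) (hXmeas : Measurable X)
    (hXunif : ∀ i : Fin d, volume {ω | X ω = Pi.single i 1} = (d : ENNReal)⁻¹)
    (S : Finset (Fin d)) (A : Set (Fin d → ℝ)) (hA : A = {y | ∃ i ∈ S, y = Pi.single i 1}) :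
    vnorm (fun t => ∫ ω in {ω | X ω ∈ A}, X ω t) = Real.sqrt S.card / d := by
  subst hA; exact key hd X hXmeas hXunif S

lemma measB {d : ℕ} (F : Finset (Fin d)) :
    MeasurableSet {y : Fin d → ℝ | ∃ i ∈ F, y = Pi.single i 1} := by
  have h : {y : Fin d → ℝ | ∃ i ∈ F, y = Pi.single i 1}
      = ⋃ i ∈ (F : Set (Fin d)), {(Pi.single i 1 : Fin d → ℝ)} := by
    ext y; simp
  rw [h]
  exact MeasurableSet.biUnion (Set.to_countable _) (fun i _ => measurableSet_singleton _)


theorem stmt_17 {d : ℕ} (hd : 2 ≤ d)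
    {Ω : Type*} [MeasureSpace Ω] [IsProbabilityMeasure (volume : Measure Ω)]
    (X : Ω → Fin d → ℝ) (hXmeas : Measurable X)
    (hXbasis : ∀ᵐ ω, ∃ i : Fin d, X ω = Pi.single i 1)
    (hXunif : ∀ i : Fin d, volume {ω | X ω = Pi.single i 1} = (d : ENNReal)⁻¹)
    (T : Finset (Fin d)) (ℓ : ℕ) (hℓ : ℓ = T.card)
    (A₁ A₂ : Set (Fin d → ℝ))
    (hA₁ : A₁ = {y | ∃ i ∈ T, y = Pi.single i 1})
    (hA₂ : A₂ = {y | ∃ i ∈ Tᶜ, y = Pi.single i 1}) :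
    -- the value of the 2-means dual objective at this partition of the basis vectors
    vnorm (fun t => ∫ ω in {ω | X ω ∈ A₁}, X ω t) +
        vnorm (fun t => ∫ ω in {ω | X ω ∈ A₂}, X ω t) =
      (Real.sqrt ℓ + Real.sqrt (d - ℓ)) / d ∧
    -- optimality of this partition forces the balanced split
    ((∀ B₁ B₂ : Set (Fin d → ℝ), MeasurableSet B₁ → MeasurableSet B₂ →
        Disjoint B₁ B₂ → (∀ᵐ ω, X ω ∈ B₁ ∪ B₂) →
        vnorm (fun t => ∫ ω in {ω | X ω ∈ B₁}, X ω t) +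
            vnorm (fun t => ∫ ω in {ω | X ω ∈ B₂}, X ω t) ≤
          vnorm (fun t => ∫ ω in {ω | X ω ∈ A₁}, X ω t) +
            vnorm (fun t => ∫ ω in {ω | X ω ∈ A₂}, X ω t)) →
      ∀ m : ℕ, m ≤ d →
        Real.sqrt m + Real.sqrt (d - m) ≤ Real.sqrt ℓ + Real.sqrt (d - ℓ)) := by
  have hd0 : 0 < d := by omega
  have hdR : (0:ℝ) < d := by exact_mod_cast hd0
  have hcompl : ∀ (F : Finset (Fin d)), ((Fᶜ : Finset (Fin d)).card : ℝ) = (d : ℝ) - F.card := by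
    intro F
    have h1 : (Fᶜ : Finset (Fin d)).card = d - F.card := by
      simp [Finset.card_compl]
    have h2 : F.card ≤ d := le_trans (Finset.card_le_univ F) (by simp)
    rw [h1, Nat.cast_sub h2]
  have hval : ∀ (F : Finset (Fin d)) (A A' : Set (Fin d → ℝ)),
      A = {y | ∃ i ∈ F, y = Pi.single i 1} → A' = {y | ∃ i ∈ Fᶜ, y = Pi.single i 1} →
      vnorm (fun t => ∫ ω in {ω | X ω ∈ A}, X ω t) +
        vnorm (fun t => ∫ ω in {ω | X ω ∈ A'}, X ω t)
      = (Real.sqrt F.card + Real.sqrt ((d:ℝ) - F.card)) / d := by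
    intro F A A' hA hA'
    rw [key' hd0 X hXmeas hXunif F A hA, key' hd0 X hXmeas hXunif Fᶜ A' hA', hcompl F,
      ← add_div]
  have hfirst : vnorm (fun t => ∫ ω in {ω | X ω ∈ A₁}, X ω t) +
        vnorm (fun t => ∫ ω in {ω | X ω ∈ A₂}, X ω t) =
      (Real.sqrt ℓ + Real.sqrt ((d:ℝ) - ℓ)) / d := by
    rw [hval T A₁ A₂ hA₁ hA₂, hℓ]
  refine ⟨hfirst, ?_⟩
  intro hopt m hm
  obtain ⟨S, -, hScard⟩ := Finset.exists_subset_card_eq (s := (Finset.univ : Finset (Fin d))) (n := m)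
    (by simpa using hm)
  set B₁ : Set (Fin d → ℝ) := {y | ∃ i ∈ S, y = Pi.single i 1} with hB₁
  set B₂ : Set (Fin d → ℝ) := {y | ∃ i ∈ Sᶜ, y = Pi.single i 1} with hB₂
  have hdisj : Disjoint B₁ B₂ := by
    rw [Set.disjoint_left]
    rintro y ⟨i, hi, rfl⟩ ⟨j, hj, hyj⟩
    exact (Finset.mem_compl.mp hj) (single_inj hyj ▸ hi)
  have hae : ∀ᵐ ω, X ω ∈ B₁ ∪ B₂ := by
    filter_upwards [hXbasis] with ω hω
    obtain ⟨i, hi⟩ := hω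
    by_cases h : i ∈ S
    · exact Or.inl ⟨i, h, hi⟩
    · exact Or.inr ⟨i, Finset.mem_compl.mpr h, hi⟩
  have h := hopt B₁ B₂ (measB S) (measB Sᶜ) hdisj hae
  rw [hfirst, hval S B₁ B₂ hB₁ hB₂, hScard] at h
  exact (div_le_div_iff_of_pos_right hdR).mp h
end
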